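/- arXiv:2508.08111 — 4 statements merged into one kernel-verified Lean document; each statement's English description precedes it below -/
import Mathlib

section
/- Let G be a group, Γ a subsemigroup of G, and k ≥ 1. If H₁,…,H_k and S₁,…,S_k are subsets of G with each Sᵢ finite, and Γ ⊆ ⋃ᵢ Sᵢ Hᵢ, then there exist an index i and a finite subset Fᵢ of G such that Γ ⊆ Fᵢ Hᵢ Hᵢ⁻¹ Fᵢ⁻¹. -/
open Pointwise

theorem stmt0 {G : Type*} [Group G] (Γ : Set G)
    (hΓ : ∀ a ∈ Γ, ∀ b ∈ Γ, a * b ∈ Γ)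
    (k : ℕ) (hk : 1 ≤ k) (H S : Fin k → Set G) (hS : ∀ i, (S i).Finite)
    (hcover : Γ ⊆ ⋃ i, S i * H i) :
    ∃ (i : Fin k) (F : Set G), F.Finite ∧ Γ ⊆ F * H i * (H i)⁻¹ * F⁻¹ := by
  classical
  rcases Set.eq_empty_or_nonempty Γ with hemp | ⟨γ₀, hγ₀⟩
  · exact ⟨⟨0, hk⟩, ∅, Set.finite_empty, by simp [hemp]⟩
  -- the left translation action of `G` on ultrafilters on `G`
  set act : G → Ultrafilter G → Ultrafilter G :=
    fun g U => Ultrafilter.map (fun z => g * z) U with hact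
  have mem_act : ∀ (g : G) (U : Ultrafilter G) (A : Set G),
      A ∈ act g U ↔ {z | g * z ∈ A} ∈ U := by
    intro g U A
    rw [hact]
    exact Ultrafilter.mem_map
  have act_act : ∀ (g w : G) (U : Ultrafilter G), act g (act w U) = act (g * w) U := by
    intro g w U
    simp only [hact, Ultrafilter.map_map]
    congr 1
    funext z
    simp [mul_assoc]
  have act_cont : ∀ g : G, Continuous (act g) := by
    intro g
    rw [ultrafilterBasis_is_basis.continuous_iff]
    rintro _ ⟨A, rfl⟩
    have h : (act g) ⁻¹' {u : Ultrafilter G | A ∈ u} = {u | {z | g * z ∈ A} ∈ u} := by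
      ext U
      simp only [Set.mem_preimage, Set.mem_setOf_eq, mem_act]
    rw [h]
    exact ultrafilter_isOpen_basic _
  -- the collection of nonempty closed invariant sets of ultrafilters containing `Γ`
  set 𝒞 : Set (Set (Ultrafilter G)) :=
    {M | M.Nonempty ∧ IsClosed M ∧ (∀ U ∈ M, Γ ∈ U) ∧ ∀ g ∈ Γ, ∀ U ∈ M, act g U ∈ M}
    with h𝒞
  have hXmem : {U : Ultrafilter G | Γ ∈ U} ∈ 𝒞 := by
    refine ⟨⟨pure γ₀, by simpa using hγ₀⟩, ultrafilter_isClosed_basic Γ,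
      fun U hU => hU, ?_⟩
    intro g hg U hU
    rw [Set.mem_setOf_eq, mem_act]
    exact Filter.mem_of_superset hU (fun z hz => hΓ g hg z hz)
  -- Zorn: a minimal element of `𝒞`
  have hzorn : ∀ c ⊆ 𝒞, IsChain (· ⊆ ·) c → c.Nonempty →
      ∃ lb ∈ 𝒞, ∀ s ∈ c, lb ⊆ s := by
    intro c hc𝒞 hchain hcne
    have hne : Nonempty c := hcne.to_subtype
    refine ⟨⋂₀ c, ⟨?_, ?_, ?_, ?_⟩, fun s hs => Set.sInter_subset_of_mem hs⟩
    · have h := IsCompact.nonempty_iInter_of_directed_nonempty_isCompact_isClosed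
        (fun s : c => (s : Set (Ultrafilter G))) ?_ ?_ ?_ ?_
      · rwa [Set.sInter_eq_iInter]
      · rintro ⟨s, hs⟩ ⟨t, ht⟩
        rcases hchain.total hs ht with h | h
        · exact ⟨⟨s, hs⟩, subset_rfl, h⟩
        · exact ⟨⟨t, ht⟩, h, subset_rfl⟩
      · exact fun s => (hc𝒞 s.2).1
      · exact fun s => ((hc𝒞 s.2).2.1).isCompact
      · exact fun s => (hc𝒞 s.2).2.1
    · exact isClosed_sInter (fun s hs => (hc𝒞 hs).2.1)
    · intro U hU
      obtain ⟨s, hs⟩ := hcne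
      exact (hc𝒞 hs).2.2.1 U (hU s hs)
    · intro g hg U hU
      intro s hs
      exact (hc𝒞 hs).2.2.2 g hg U (hU s hs)
  obtain ⟨M, -, hMmin⟩ := zorn_superset_nonempty 𝒞 hzorn _ hXmem
  obtain ⟨hMne, hMcl, hMX, hMinv⟩ := hMmin.1
  obtain ⟨U₀, hU₀⟩ := hMne
  have hΓU₀ : Γ ∈ U₀ := hMX U₀ hU₀
  -- choose a piece `sStar * H iStar` which is `U₀`-large
  have h1 : ∃ i : Fin k, Γ ∩ (S i * H i) ∈ U₀ := by
    have hsub : Γ ⊆ ⋃ i ∈ (Set.univ : Set (Fin k)), Γ ∩ (S i * H i) := by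
      intro x hx
      obtain ⟨i, hxt⟩ := Set.mem_iUnion.mp (hcover hx)
      exact Set.mem_biUnion (Set.mem_univ i) ⟨hx, hxt⟩
    obtain ⟨i, -, hi⟩ := (Ultrafilter.finite_biUnion_mem_iff Set.finite_univ).mp
      (Filter.mem_of_superset hΓU₀ hsub)
    exact ⟨i, hi⟩
  obtain ⟨iStar, hiStar⟩ := h1
  have h2 : ∃ s ∈ S iStar, Γ ∩ {g | ∃ h ∈ H iStar, g = s * h} ∈ U₀ := by
    have hsub : Γ ∩ (S iStar * H iStar) ⊆
        ⋃ s ∈ S iStar, Γ ∩ {g | ∃ h ∈ H iStar, g = s * h} := by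
      rintro x ⟨hxΓ, hxm⟩
      obtain ⟨s, hs, h, hh, heq⟩ := Set.mem_mul.mp hxm
      exact Set.mem_biUnion hs ⟨hxΓ, h, hh, heq.symm⟩
    obtain ⟨s, hs, hmem⟩ := (Ultrafilter.finite_biUnion_mem_iff (hS iStar)).mp
      (Filter.mem_of_superset hiStar hsub)
    exact ⟨s, hs, hmem⟩
  obtain ⟨sStar, hsStarS, hP⟩ := h2
  set P : Set G := Γ ∩ {g | ∃ h ∈ H iStar, g = sStar * h} with hPdef
  -- key: by minimality, every `V ∈ M` contains a translated copy of `P`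
  have key : ∀ V ∈ M, ∃ x : G, (x ∈ Γ ∨ x = 1) ∧ {z | x * z ∈ P} ∈ V := by
    intro V hV
    by_contra hbad
    push_neg at hbad
    set S0 : Set (Ultrafilter G) := insert V {W | ∃ w ∈ Γ, W = act w V} with hS0
    have hS0M : S0 ⊆ M := by
      rintro W (rfl | ⟨w, hw, rfl⟩)
      · exact hV
      · exact hMinv w hw V hV
    have hM₀M : closure S0 ⊆ M := closure_minimal hS0M hMcl
    have hM₀𝒞 : closure S0 ∈ 𝒞 := by
      refine ⟨⟨V, subset_closure (Set.mem_insert _ _)⟩, isClosed_closure,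
        fun U hU => hMX U (hM₀M hU), ?_⟩
      intro g hg U hU
      have h1 : act g '' closure S0 ⊆ closure (act g '' S0) :=
        image_closure_subset_closure_image (act_cont g)
      have h2 : act g '' S0 ⊆ S0 := by
        rintro _ ⟨W, hW, rfl⟩
        rcases hW with rfl | ⟨w, hw, rfl⟩
        · exact Set.mem_insert_iff.2 (Or.inr ⟨g, hg, rfl⟩)
        · rw [act_act]
          exact Set.mem_insert_iff.2 (Or.inr ⟨g * w, hΓ g hg w hw, rfl⟩)
      have h3 : closure (act g '' S0) ⊆ closure S0 := closure_mono h2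
      exact h3 (h1 ⟨U, hU, rfl⟩)
    have hMsub : M ⊆ closure S0 := hMmin.2 hM₀𝒞 hM₀M
    have hU₀M₀ : U₀ ∈ closure S0 := hMsub hU₀
    obtain ⟨W, hWP, hWS0⟩ := mem_closure_iff.mp hU₀M₀ {W | P ∈ W}
      (ultrafilter_isOpen_basic P) hP
    rcases hWS0 with rfl | ⟨w, hw, rfl⟩
    · refine hbad 1 (Or.inr rfl) ?_
      have : {z : G | 1 * z ∈ P} = P := by
        ext z; simp
      rw [this]
      exact hWP
    · exact hbad w (Or.inl hw) ((mem_act w V P).mp hWP)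
  -- compactness: a finite set `T` suffices
  set T0 : Set G := Γ ∪ {1} with hT0
  have hMcover : M ⊆ ⋃ x : T0, {V : Ultrafilter G | {z | (x : G) * z ∈ P} ∈ V} := by
    intro V hV
    obtain ⟨x, hx, hxV⟩ := key V hV
    have hx' : x ∈ T0 := by
      rcases hx with h | h
      · exact Or.inl h
      · exact Or.inr (by simp [h])
    exact Set.mem_iUnion.2 ⟨⟨x, hx'⟩, hxV⟩
  obtain ⟨T, hT⟩ := (hMcl.isCompact).elim_finite_subcover
    (fun x : T0 => {V : Ultrafilter G | {z | (x : G) * z ∈ P} ∈ V})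
    (fun x => ultrafilter_isOpen_basic _) hMcover
  -- the finite set `F`
  refine ⟨iStar, ↑(T.image (fun t : T0 => (t : G)⁻¹ * sStar)), (T.image _).finite_toSet, ?_⟩
  intro y hy
  -- `U₀ ∈ M` gives `x₀`, `act y U₀ ∈ M` gives `x₁`
  obtain ⟨x₀, hx₀T, hx₀⟩ : ∃ x₀ ∈ T, {z | (x₀ : G) * z ∈ P} ∈ U₀ := by
    have := hT hU₀
    rw [Set.mem_iUnion₂] at this
    obtain ⟨x₀, hx₀T, hx₀⟩ := this
    exact ⟨x₀, hx₀T, hx₀⟩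
  obtain ⟨x₁, hx₁T, hx₁⟩ : ∃ x₁ ∈ T, {z | (x₁ : G) * z ∈ P} ∈ act y U₀ := by
    have hyU : act y U₀ ∈ M := hMinv y hy U₀ hU₀
    have := hT hyU
    rw [Set.mem_iUnion₂] at this
    obtain ⟨x₁, hx₁T, hx₁⟩ := this
    exact ⟨x₁, hx₁T, hx₁⟩
  have hx₁' : {z | (x₁ : G) * (y * z) ∈ P} ∈ U₀ := by
    have := (mem_act y U₀ {z | (x₁ : G) * z ∈ P}).mp hx₁
    exact this
  obtain ⟨z, hz1, hz2⟩ := Ultrafilter.nonempty_of_mem (Filter.inter_mem hx₁' hx₀)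
  have hz1' : (x₁ : G) * (y * z) ∈ P := hz1
  have hz2' : (x₀ : G) * z ∈ P := hz2
  obtain ⟨-, h₁, hh₁, heq₁⟩ := hz1'
  obtain ⟨-, h₂, hh₂, heq₂⟩ := hz2'
  -- now solve for y
  have hyeq : y = ((x₁ : G)⁻¹ * sStar) * h₁ * h₂⁻¹ * ((x₀ : G)⁻¹ * sStar)⁻¹ := by
    have hz : z = (x₀ : G)⁻¹ * (sStar * h₂) := by
      rw [← heq₂]; group
    rw [hz] at heq₁
    have hy' : y = (x₁ : G)⁻¹ * (sStar * h₁) * ((x₀ : G)⁻¹ * (sStar * h₂))⁻¹ := by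
      have : (x₁ : G)⁻¹ * ((x₁ : G) * (y * ((x₀ : G)⁻¹ * (sStar * h₂)))) *
          ((x₀ : G)⁻¹ * (sStar * h₂))⁻¹ = y := by group
      rw [← this, heq₁]
    rw [hy']
    group
  rw [hyeq]
  refine Set.mul_mem_mul (Set.mul_mem_mul (Set.mul_mem_mul ?_ hh₁) ?_) ?_
  · exact Finset.mem_coe.2 (Finset.mem_image.2 ⟨x₁, hx₁T, rfl⟩)
  · exact Set.inv_mem_inv.2 hh₂
  · exact Set.inv_mem_inv.2 (Finset.mem_coe.2 (Finset.mem_image.2 ⟨x₀, hx₀T, rfl⟩))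
end

section
/- For every ε > 0 there exists D ≥ 1 such that: for every g ∈ GL(V) of a Euclidean space V of dimension d ≥ 2, there exist a point y_g⁺ ∈ ℙ(V) and a projective hyperplane Y_g⁻ ⊂ ℙ(V) such that the restriction of the projective action of g to the set B^ε_{Y_g⁻} of points at distance ≥ ε from Y_g⁻ is D·e^{−(μ₁(g)−μ₂(g))}-Lipschitz and its image is contained in the closed ball of radius D·e^{−(μ₁(g)−μ₂(g))} around y_g⁺, where μ₁(g) ≥ μ₂(g) are the logarithms of the two largest singular values of g. -/
open scoped RealInnerProductSpace

section Aux

lemma opNorm_exists_max {E F : Type*} [NormedAddCommGroup E] [NormedSpace ℝ E]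
    [NormedAddCommGroup F] [NormedSpace ℝ F] [Nontrivial E] [FiniteDimensional ℝ E]
    (f : E →L[ℝ] F) : ∃ v : E, ‖v‖ = 1 ∧ ‖f v‖ = ‖f‖ := by
  obtain ⟨v, hv, hmax⟩ := (isCompact_sphere (0:E) 1).exists_isMaxOn
    (NormedSpace.sphere_nonempty.mpr zero_le_one)
    (continuous_norm.comp f.continuous).continuousOn
  rw [mem_sphere_iff_norm, sub_zero] at hv
  refine ⟨v, hv, le_antisymm (f.unit_le_opNorm v hv.le) ?_⟩
  refine f.opNorm_le_bound (norm_nonneg _) (fun x => ?_)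
  rcases eq_or_ne x 0 with rfl | hx
  · simp
  · have h1 : ‖x‖⁻¹ • x ∈ Metric.sphere (0:E) 1 := by
      simp [norm_smul, abs_of_nonneg, inv_mul_cancel₀ (norm_ne_zero_iff.mpr hx)]
    have h2 : ‖f (‖x‖⁻¹ • x)‖ ≤ ‖f v‖ := hmax h1
    rw [map_smul, norm_smul, norm_inv, norm_norm] at h2
    have hxpos : (0:ℝ) < ‖x‖ := norm_pos_iff.mpr hx
    calc ‖f x‖ = ‖x‖ * (‖x‖⁻¹ * ‖f x‖) := by field_simp
    _ ≤ ‖x‖ * ‖f v‖ := by nlinarith [h2]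
    _ = ‖f v‖ * ‖x‖ := mul_comm _ _

lemma maximizer_orthogonal {E F : Type*} [NormedAddCommGroup E] [InnerProductSpace ℝ E]
    [NormedAddCommGroup F] [InnerProductSpace ℝ F]
    (f : E →L[ℝ] F) (v : E) (hv : ‖v‖ = 1) (hmax : ‖f v‖ = ‖f‖) (w : E)
    (hw : ⟪v, w⟫ = 0) : ⟪f v, f w⟫ = 0 := by
  set I := (⟪f v, f w⟫ : ℝ) with hI
  set C := ‖f‖ ^ 2 * ‖w‖ ^ 2 with hC
  have hC0 : 0 ≤ C := by positivity
  have master : ∀ t : ℝ, 2 * t * I ≤ t ^ 2 * C := by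
    intro t
    have h1 : ‖f (v + t • w)‖ ≤ ‖f‖ * ‖v + t • w‖ := f.le_opNorm _
    have h2 : ‖f (v + t • w)‖ ^ 2 ≤ ‖f‖ ^ 2 * ‖v + t • w‖ ^ 2 := by
      calc ‖f (v + t • w)‖ ^ 2 ≤ (‖f‖ * ‖v + t • w‖) ^ 2 :=
            pow_le_pow_left₀ (norm_nonneg _) h1 2
      _ = ‖f‖ ^ 2 * ‖v + t • w‖ ^ 2 := mul_pow _ _ 2
    rw [map_add, map_smul] at h2
    rw [norm_add_sq_real, norm_add_sq_real] at h2
    rw [real_inner_smul_right, real_inner_smul_right, norm_smul, norm_smul] at h2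
    rw [hw, hmax] at h2
    have h3 : ‖f w‖ ^ 2 ≤ ‖f‖ ^ 2 * ‖w‖ ^ 2 := by
      rw [← mul_pow]
      exact pow_le_pow_left₀ (norm_nonneg _) (f.le_opNorm w) 2
    simp only [mul_pow, Real.norm_eq_abs, sq_abs, hv] at h2
    nlinarith [sq_nonneg t]
  have hC1 : (0:ℝ) < C + 1 := by linarith
  have key := master (I / (C + 1))
  have ht : I / (C + 1) * (C + 1) = I := div_mul_cancel₀ _ (ne_of_gt hC1)
  set t := I / (C + 1) with htdef
  have hIt : I = t * (C + 1) := ht.symm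
  rw [hIt] at key
  have ht0 : t = 0 := by nlinarith [sq_nonneg t]
  rw [hIt, ht0, zero_mul]

end Aux

/-- The angle metric `d([v],[w]) = sin ∠(v,w)` on real projective space. -/
noncomputable def dproj {d : ℕ}
    (x y : Projectivization ℝ (EuclideanSpace ℝ (Fin d))) : ℝ :=
  Real.sqrt (1 - ((inner ℝ x.rep y.rep : ℝ) / (‖x.rep‖ * ‖y.rep‖)) ^ 2)

/-- The projective action of an invertible linear map. -/
noncomputable def projAct {d : ℕ}
    (g : EuclideanSpace ℝ (Fin d) ≃L[ℝ] EuclideanSpace ℝ (Fin d)) :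
    Projectivization ℝ (EuclideanSpace ℝ (Fin d)) →
      Projectivization ℝ (EuclideanSpace ℝ (Fin d)) :=
  Projectivization.map (g.toLinearEquiv : EuclideanSpace ℝ (Fin d) →ₗ[ℝ] EuclideanSpace ℝ (Fin d))
    g.toLinearEquiv.injective

/-- `μ₁(g)`: the logarithm of the first singular value (the operator norm). -/
noncomputable def mu1 {d : ℕ}
    (g : EuclideanSpace ℝ (Fin d) ≃L[ℝ] EuclideanSpace ℝ (Fin d)) : ℝ :=
  Real.log ‖(g : EuclideanSpace ℝ (Fin d) →L[ℝ] EuclideanSpace ℝ (Fin d))‖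

/-- `μ₂(g)`: the logarithm of the second singular value, via the Courant–Fischer
characterization `s₂(g) = min over hyperplanes W of ‖g|_W‖`. -/
noncomputable def mu2 {d : ℕ}
    (g : EuclideanSpace ℝ (Fin d) ≃L[ℝ] EuclideanSpace ℝ (Fin d)) : ℝ :=
  Real.log (⨅ W : {W : Submodule ℝ (EuclideanSpace ℝ (Fin d)) //
      Module.finrank ℝ W = d - 1},
    ‖((g : EuclideanSpace ℝ (Fin d) →L[ℝ] EuclideanSpace ℝ (Fin d)).comp W.1.subtypeL)‖)

section Aux2

lemma q_sq_smul {d : ℕ} (a b : ℝ) (ha : a ≠ 0) (hb : b ≠ 0)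
    (v w : EuclideanSpace ℝ (Fin d)) (hv : v ≠ 0) (hw : w ≠ 0) :
    ((⟪a • v, b • w⟫) / (‖a • v‖ * ‖b • w‖)) ^ 2 = ((⟪v, w⟫) / (‖v‖ * ‖w‖)) ^ 2 := by
  have h1 : ‖v‖ ≠ 0 := norm_ne_zero_iff.mpr hv
  have h2 : ‖w‖ ≠ 0 := norm_ne_zero_iff.mpr hw
  have h3 : |a| ≠ 0 := abs_ne_zero.mpr ha
  have h4 : |b| ≠ 0 := abs_ne_zero.mpr hb
  rw [real_inner_smul_left, real_inner_smul_right, norm_smul, norm_smul]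
  field_simp
  rw [Real.norm_eq_abs, Real.norm_eq_abs, sq_abs, sq_abs]
  ring

lemma dproj_mk {d : ℕ} (v w : EuclideanSpace ℝ (Fin d)) (hv : v ≠ 0) (hw : w ≠ 0) :
    dproj (Projectivization.mk ℝ v hv) (Projectivization.mk ℝ w hw)
      = Real.sqrt (1 - ((⟪v, w⟫) / (‖v‖ * ‖w‖)) ^ 2) := by
  set x := Projectivization.mk ℝ v hv with hx
  set y := Projectivization.mk ℝ w hw with hy
  obtain ⟨a, ha⟩ := (Projectivization.mk_eq_mk_iff ℝ _ _ x.rep_nonzero hv).mp (x.mk_rep)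
  obtain ⟨b, hb⟩ := (Projectivization.mk_eq_mk_iff ℝ _ _ y.rep_nonzero hw).mp (y.mk_rep)
  rw [Units.smul_def] at ha hb
  rw [dproj, ← ha, ← hb, q_sq_smul (a:ℝ) (b:ℝ) a.ne_zero b.ne_zero v w hv hw]

end Aux2


lemma sq_le' {a b : ℝ} (ha : 0 ≤ a) (hb : 0 ≤ b) (h : a^2 ≤ b^2) : a ≤ b := by nlinarith

lemma aux_zlow {σ s nz nfz α β : ℝ} (hσ : 0 ≤ σ) (hσs : σ ≤ s) (hnfz : 0 ≤ nfz)
    (h1 : nz^2 = α^2 + β^2) (h2 : nfz^2 = α^2*s^2 + β^2*σ^2) (hnz : 0 ≤ nz) :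
    σ * nz ≤ nfz := by
  apply sq_le' (mul_nonneg hσ hnz) hnfz
  have hσ2 : σ^2 ≤ s^2 := by nlinarith
  nlinarith [mul_nonneg (sub_nonneg.mpr hσ2) (sq_nonneg α), sq_nonneg β]

lemma aux_low {ε c s w2 nf : ℝ} (hε : 0 < ε) (hc : ε ≤ |c|) (hs : 0 ≤ s) (hnf : 0 ≤ nf)
    (h : nf^2 = c^2*s^2 + w2) (hw2 : 0 ≤ w2) : ε*s ≤ nf := by
  apply sq_le' (mul_nonneg hε.le hs) hnf
  have hc2 : ε^2 ≤ c^2 := by nlinarith [abs_nonneg c, sq_abs c]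
  nlinarith [mul_le_mul_of_nonneg_right hc2 (sq_nonneg s)]

lemma aux_gram {na nb ip t nd : ℝ} (h : nd^2 = nb^2 - 2*t*ip + t^2*na^2) :
    na^2*nb^2 - ip^2 ≤ na^2*nd^2 := by nlinarith [sq_nonneg (ip - t*na^2)]

lemma aux_abs1 {c : ℝ} (h : (0:ℝ) = 1 - c^2) : |c| = 1 := by
  have h2 : c^2 = 1 := by linarith
  rw [← sq_abs] at h2
  nlinarith [abs_nonneg c]

lemma aux_sqrt_le_one {t : ℝ} : Real.sqrt (1 - t^2) ≤ 1 := by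
  refine Real.sqrt_le_sqrt ?_ |>.trans_eq Real.sqrt_one
  nlinarith [sq_nonneg t]

lemma aux_wle {nw c : ℝ} (h : nw^2 = 1 - c^2) (hnw : 0 ≤ nw) : nw ≤ 1 := by
  nlinarith [sq_nonneg c]

set_option maxHeartbeats 4000000 in
theorem stmt9 (d : ℕ) (hd : 2 ≤ d) (ε : ℝ) (hε : 0 < ε) :
    ∃ D : ℝ, 1 ≤ D ∧
      ∀ g : EuclideanSpace ℝ (Fin d) ≃L[ℝ] EuclideanSpace ℝ (Fin d),
        ∃ (yplus : Projectivization ℝ (EuclideanSpace ℝ (Fin d)))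
          (W : Submodule ℝ (EuclideanSpace ℝ (Fin d))),
          Module.finrank ℝ W = d - 1 ∧
          (∀ x y : Projectivization ℝ (EuclideanSpace ℝ (Fin d)),
            (∀ z, z.submodule ≤ W → ε ≤ dproj x z) →
            (∀ z, z.submodule ≤ W → ε ≤ dproj y z) →
            dproj (projAct g x) (projAct g y)
              ≤ D * Real.exp (-(mu1 g - mu2 g)) * dproj x y) ∧
          (∀ x : Projectivization ℝ (EuclideanSpace ℝ (Fin d)),
            (∀ z, z.submodule ≤ W → ε ≤ dproj x z) →
            dproj (projAct g x) yplus ≤ D * Real.exp (-(mu1 g - mu2 g))) := by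
  classical
  have hfr : Module.finrank ℝ (EuclideanSpace ℝ (Fin d)) = d := finrank_euclideanSpace_fin
  haveI : Nontrivial (EuclideanSpace ℝ (Fin d)) :=
    Module.nontrivial_of_finrank_pos (R := ℝ) (by omega : 0 < Module.finrank ℝ (EuclideanSpace ℝ (Fin d)))
  have hε2 : (0:ℝ) < ε^2 := by positivity
  have hεD : 1/ε ≤ 1 + 2/ε^2 := by
    have h3 : 1/ε = ε/ε^2 := by rw [sq]; field_simp
    have h4 : ε/ε^2 ≤ (ε^2+2)/ε^2 := by
      gcongr
      nlinarith [sq_nonneg (ε-1)]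
    have h5 : (ε^2+2)/ε^2 = 1 + 2/ε^2 := by rw [add_div, div_self (ne_of_gt hε2)]
    rw [h3, ← h5]
    exact h4
  have hD1 : 1 ≤ 1 + 2/ε^2 := by
    have h6 : (0:ℝ) < 2/ε^2 := by positivity
    linarith
  refine ⟨1 + 2/ε^2, hD1, fun g => ?_⟩
  set f := (g : EuclideanSpace ℝ (Fin d) →L[ℝ] EuclideanSpace ℝ (Fin d)) with hfdef
  have hfapp : ∀ p, f p = g p := fun p => rfl
  have hfinj : Function.Injective f := g.injective
  have hfne : ∀ p : EuclideanSpace ℝ (Fin d), p ≠ 0 → f p ≠ 0 := by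
    intro p hp h
    exact hp (hfinj (by rw [h, map_zero]))
  obtain ⟨v, hv1, hvmax⟩ := opNorm_exists_max f
  have hv0 : v ≠ 0 := fun h => by simp [h] at hv1
  have hfv0 : f v ≠ 0 := hfne v hv0
  have hs1 : 0 < ‖f‖ := by rw [← hvmax]; exact norm_pos_iff.mpr hfv0
  set W : Submodule ℝ (EuclideanSpace ℝ (Fin d)) := (ℝ ∙ v)ᗮ with hWdef
  have hWrank : Module.finrank ℝ W = d - 1 := by
    have h1 : Module.finrank ℝ (ℝ ∙ v) = 1 := finrank_span_singleton hv0
    have h2 := Submodule.finrank_add_finrank_orthogonal (K := ℝ ∙ v)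
    rw [hWdef]
    omega
  have hWsub : ∀ p : EuclideanSpace ℝ (Fin d), ⟪v, p⟫ = 0 → p ∈ W := by
    intro p hp
    rw [hWdef, Submodule.mem_orthogonal]
    intro y hy
    obtain ⟨α, rfl⟩ := Submodule.mem_span_singleton.mp hy
    rw [real_inner_smul_left, hp, mul_zero]
  have horth : ∀ w ∈ W, ⟪f v, f w⟫ = 0 := by
    intro w hw
    refine maximizer_orthogonal f v hv1 hvmax w ?_
    exact (Submodule.mem_orthogonal _ _).mp hw v (Submodule.mem_span_singleton_self v)
  haveI : Nontrivial W :=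
    Module.nontrivial_of_finrank_pos (R := ℝ) (by omega : 0 < Module.finrank ℝ W)
  obtain ⟨u0, hu01, hu0max⟩ := opNorm_exists_max (f.comp W.subtypeL)
  set u := (u0 : EuclideanSpace ℝ (Fin d)) with hudef
  have huW : u ∈ W := u0.2
  have hun : ‖u‖ = 1 := hu01
  have hu0 : u ≠ 0 := fun h => by simp [h] at hun
  set σW := ‖f.comp W.subtypeL‖ with hσdef
  have hσeq : ‖f u‖ = σW := hu0max
  have hσ0 : 0 < σW := by rw [← hσeq]; exact norm_pos_iff.mpr (hfne u hu0)
  have hσle : σW ≤ ‖f‖ := by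
    rw [← hσeq]
    calc ‖f u‖ ≤ ‖f‖ * ‖u‖ := f.le_opNorm u
    _ = ‖f‖ := by rw [hun, mul_one]
  have hrestr : ∀ w ∈ W, ‖f w‖ ≤ σW * ‖w‖ := by
    intro w hw
    exact (f.comp W.subtypeL).le_opNorm (⟨w, hw⟩ : W)
  have hvu : ⟪v, u⟫ = 0 :=
    (Submodule.mem_orthogonal _ _).mp huW v (Submodule.mem_span_singleton_self v)
  have hvv : ⟪v, v⟫ = 1 := by rw [real_inner_self_eq_norm_sq, hv1, one_pow]
  -- the infimum equals σW
  haveI hne : Nonempty {W' : Submodule ℝ (EuclideanSpace ℝ (Fin d)) //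
      Module.finrank ℝ W' = d - 1} := ⟨⟨W, hWrank⟩⟩
  have hinf : (⨅ W' : {W' : Submodule ℝ (EuclideanSpace ℝ (Fin d)) //
      Module.finrank ℝ W' = d - 1}, ‖f.comp W'.1.subtypeL‖) = σW := by
    apply le_antisymm
    · have hbdd : BddBelow (Set.range (fun W' : {W' : Submodule ℝ (EuclideanSpace ℝ (Fin d)) //
          Module.finrank ℝ W' = d - 1} => ‖f.comp W'.1.subtypeL‖)) := by
        refine ⟨0, ?_⟩
        rintro x ⟨i, rfl⟩
        exact norm_nonneg (f.comp i.1.subtypeL)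
      exact ciInf_le hbdd ⟨W, hWrank⟩
    · refine le_ciInf fun W' => ?_
      set U : Submodule ℝ (EuclideanSpace ℝ (Fin d)) := (ℝ ∙ v) ⊔ (ℝ ∙ u) with hUdef
      have hU2 : Module.finrank ℝ U = 2 := by
        rw [hUdef]
        have h2 := Submodule.finrank_sup_add_finrank_inf_eq (ℝ ∙ v) (ℝ ∙ u)
        have hbot : (ℝ ∙ v) ⊓ (ℝ ∙ u) = ⊥ := by
          rw [Submodule.eq_bot_iff]
          rintro z ⟨hz1, hz2⟩
          obtain ⟨α, rfl⟩ := Submodule.mem_span_singleton.mp hz1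
          obtain ⟨β, hβ⟩ := Submodule.mem_span_singleton.mp hz2
          have : ⟪v, α • v⟫ = 0 := by
            rw [← hβ, real_inner_smul_right, hvu, mul_zero]
          rw [real_inner_smul_right, hvv, mul_one] at this
          rw [this, zero_smul]
        rw [hbot, finrank_bot, finrank_span_singleton hv0, finrank_span_singleton hu0] at h2
        omega
      have hWU : W'.1 ⊓ U ≠ ⊥ := by
        intro hbot
        have h3 := Submodule.finrank_sup_add_finrank_inf_eq W'.1 U
        rw [hbot, finrank_bot, W'.2, hU2] at h3
        have h4 := Submodule.finrank_le (R := ℝ) (W'.1 ⊔ U)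
        rw [hfr] at h4
        omega
      obtain ⟨z, hz, hz0⟩ := Submodule.ne_bot_iff _ |>.mp hWU
      obtain ⟨hzW', hzU⟩ := Submodule.mem_inf.mp hz
      obtain ⟨p1, hp1, p2, hp2, hz12⟩ := Submodule.mem_sup.mp hzU
      obtain ⟨α, rfl⟩ := Submodule.mem_span_singleton.mp hp1
      obtain ⟨β, rfl⟩ := Submodule.mem_span_singleton.mp hp2
      have hzn : ‖z‖^2 = α^2 + β^2 := by
        rw [← hz12, norm_add_sq_real, real_inner_smul_left, real_inner_smul_right, hvu,
          norm_smul, norm_smul]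
        simp only [mul_pow, Real.norm_eq_abs, sq_abs, hv1, hun]
        ring
      have hfvu : ⟪f v, f u⟫ = 0 := horth u huW
      have hfzn : ‖f z‖^2 = α^2*‖f‖^2 + β^2*σW^2 := by
        rw [← hz12, map_add, map_smul, map_smul, norm_add_sq_real, real_inner_smul_left,
          real_inner_smul_right, hfvu, norm_smul, norm_smul]
        simp only [mul_pow, Real.norm_eq_abs, sq_abs, hvmax, hσeq]
        ring
      have hz0' : 0 < ‖z‖ := norm_pos_iff.mpr hz0
      have hlin : σW * ‖z‖ ≤ ‖f z‖ :=
        aux_zlow hσ0.le hσle (norm_nonneg _) hzn hfzn (norm_nonneg _)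
      have hcomp : ‖f z‖ ≤ ‖f.comp W'.1.subtypeL‖ * ‖z‖ :=
        (f.comp W'.1.subtypeL).le_opNorm (⟨z, hzW'⟩ : W'.1)
      exact le_of_mul_le_mul_right (by linarith) hz0'
  have hexp : Real.exp (-(mu1 g - mu2 g)) = σW / ‖f‖ := by
    have h1 : mu2 g = Real.log σW := by
      rw [mu2]
      exact congrArg Real.log hinf
    rw [neg_sub, Real.exp_sub, h1, mu1, Real.exp_log hσ0, Real.exp_log hs1]
  -- unit representatives
  have unitRep : ∀ x : Projectivization ℝ (EuclideanSpace ℝ (Fin d)),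
      ∃ (p : EuclideanSpace ℝ (Fin d)) (hp : p ≠ 0), ‖p‖ = 1 ∧
        x = Projectivization.mk ℝ p hp := by
    intro x
    have hr0 : x.rep ≠ 0 := x.rep_nonzero
    have hrn : ‖x.rep‖ ≠ 0 := norm_ne_zero_iff.mpr hr0
    refine ⟨‖x.rep‖⁻¹ • x.rep, smul_ne_zero (inv_ne_zero hrn) hr0, ?_, ?_⟩
    · rw [norm_smul, norm_inv, norm_norm, inv_mul_cancel₀ hrn]
    · conv_lhs => rw [← x.mk_rep]
      rw [Projectivization.mk_eq_mk_iff']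
      exact ⟨‖x.rep‖, by rw [smul_smul, mul_inv_cancel₀ hrn, one_smul]⟩
  -- projective action on mk
  have hproj : ∀ (p : EuclideanSpace ℝ (Fin d)) (hp : p ≠ 0),
      projAct g (Projectivization.mk ℝ p hp) = Projectivization.mk ℝ (f p) (hfne p hp) := by
    intro p hp
    unfold projAct
    rw [Projectivization.map_mk]
    rfl
  -- decoding the hypothesis
  have hdecode : ∀ (x : Projectivization ℝ (EuclideanSpace ℝ (Fin d)))
      (p : EuclideanSpace ℝ (Fin d)) (hp : p ≠ 0) (hpn : ‖p‖ = 1),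
      x = Projectivization.mk ℝ p hp →
      (∀ z, z.submodule ≤ W → ε ≤ dproj x z) → ε ≤ |⟪p, v⟫| := by
    intro x p hp hpn hxeq hyp
    set c := (⟪p, v⟫ : ℝ) with hc
    set w := p - c • v with hw
    have hwv : ⟪v, w⟫ = 0 := by
      rw [hw, inner_sub_right, real_inner_smul_right, hvv, real_inner_comm p v, ← hc]
      ring
    have hwW : w ∈ W := hWsub w hwv
    have hw2 : ‖w‖^2 = 1 - c^2 := by
      rw [hw, norm_sub_sq_real, real_inner_smul_right, ← hc, norm_smul]
      simp only [mul_pow, Real.norm_eq_abs, sq_abs, hpn, hv1]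
      ring
    have hε1 : ε ≤ 1 := by
      have hsubu : (Projectivization.mk ℝ u hu0).submodule ≤ W := by
        rw [Projectivization.submodule_mk, Submodule.span_singleton_le_iff_mem]
        exact huW
      have h1 := hyp _ hsubu
      refine h1.trans ?_
      rw [dproj]
      exact aux_sqrt_le_one
    rcases eq_or_ne w 0 with hw0 | hw0
    · have : (0:ℝ) = 1 - c^2 := by rw [← hw2, hw0, norm_zero]; ring
      have habs : |c| = 1 := aux_abs1 this
      rw [habs]; exact hε1
    · have hsubw : (Projectivization.mk ℝ w hw0).submodule ≤ W := by
        rw [Projectivization.submodule_mk, Submodule.span_singleton_le_iff_mem]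
        exact hwW
      have h1 := hyp _ hsubw
      rw [hxeq, dproj_mk, hpn, one_mul] at h1
      have hpw : ⟪p, w⟫ = ‖w‖^2 := by
        rw [hw, inner_sub_right, real_inner_smul_right, hw2]
        have : ⟪p, p⟫ = 1 := by rw [real_inner_self_eq_norm_sq, hpn, one_pow]
        rw [this, ← hc]
        ring
      have hwn : ‖w‖ ≠ 0 := norm_ne_zero_iff.mpr hw0
      rw [hpw] at h1
      have hdiv : ‖w‖^2 / ‖w‖ = ‖w‖ := by
        rw [sq, mul_div_assoc, div_self hwn, mul_one]
      rw [hdiv] at h1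
      have : (1:ℝ) - ‖w‖^2 = c^2 := by rw [hw2]; ring
      rw [this, Real.sqrt_sq_eq_abs] at h1
      exact h1
  -- lower bound for images
  have hlow : ∀ p : EuclideanSpace ℝ (Fin d), ‖p‖ = 1 → ε ≤ |⟪p, v⟫| →
      ε * ‖f‖ ≤ ‖f p‖ := by
    intro p hpn hpc
    set c := (⟪p, v⟫ : ℝ) with hc
    set w := p - c • v with hw
    have hwv : ⟪v, w⟫ = 0 := by
      rw [hw, inner_sub_right, real_inner_smul_right, hvv, real_inner_comm p v, ← hc]
      ring
    have hwW : w ∈ W := hWsub w hwv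
    have hsplit : p = c • v + w := by rw [hw]; abel
    have hfn : ‖f p‖^2 = c^2*‖f‖^2 + ‖f w‖^2 := by
      conv_lhs => rw [hsplit]
      rw [map_add, map_smul, norm_add_sq_real, real_inner_smul_left, horth w hwW, norm_smul]
      simp only [mul_pow, Real.norm_eq_abs, sq_abs, hvmax]
      ring
    exact aux_low hε hpc (norm_nonneg _) (norm_nonneg _) hfn (sq_nonneg ‖f w‖)
  -- decomposition facts
  have hdecomp : ∀ p : EuclideanSpace ℝ (Fin d), ‖p‖ = 1 →
      (p - (⟪p, v⟫ : ℝ) • v) ∈ W ∧ ‖p - (⟪p, v⟫ : ℝ) • v‖^2 = 1 - (⟪p, v⟫ : ℝ)^2 := by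
    intro p hpn
    constructor
    · refine hWsub _ ?_
      rw [inner_sub_right, real_inner_smul_right, hvv, real_inner_comm p v]
      ring
    · rw [norm_sub_sq_real, real_inner_smul_right, norm_smul]
      simp only [mul_pow, Real.norm_eq_abs, sq_abs, hpn, hv1]
      ring
  refine ⟨Projectivization.mk ℝ (f v) hfv0, W, hWrank, ?_, ?_⟩
  · -- Lipschitz claim
    intro x y hx hy
    obtain ⟨p, hp0, hpn, hxeq⟩ := unitRep x
    obtain ⟨r, hr0, hrn, hyeq⟩ := unitRep y
    have hcx : ε ≤ |⟪p, v⟫| := hdecode x p hp0 hpn hxeq hx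
    have hcy : ε ≤ |⟪r, v⟫| := hdecode y r hr0 hrn hyeq hy
    set c := (⟪p, v⟫ : ℝ) with hc
    set c' := (⟪r, v⟫ : ℝ) with hc'
    set q := (⟪p, r⟫ : ℝ) with hq
    set y' := r - q • p with hy'
    have hy'2 : ‖y'‖^2 = 1 - q^2 := by
      rw [hy', norm_sub_sq_real, real_inner_smul_right, real_inner_comm p r, ← hq, norm_smul]
      simp only [mul_pow, Real.norm_eq_abs, sq_abs, hpn, hrn]
      ring
    have hdxy : dproj x y = ‖y'‖ := by
      rw [hxeq, hyeq, dproj_mk, hpn, hrn, one_mul, div_one, ← hq,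
        show (1:ℝ) - q^2 = ‖y'‖^2 from hy'2.symm, Real.sqrt_sq (norm_nonneg _)]
    have hc0 : c ≠ 0 := by
      intro h
      rw [h, abs_zero] at hcx
      linarith
    set u1 := c⁻¹ • (c • r - c' • p) with hu1
    have hinner1 : ⟪v, c • r - c' • p⟫ = 0 := by
      rw [inner_sub_right, real_inner_smul_right, real_inner_smul_right,
        real_inner_comm r v, real_inner_comm p v, ← hc, ← hc']
      ring
    have hu1W : u1 ∈ W := Submodule.smul_mem _ _ (hWsub _ hinner1)
    have hy'v : ⟪y', v⟫ = c' - q*c := by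
      rw [hy', inner_sub_left, real_inner_smul_left, ← hc, ← hc']
    have hkey : c • r - c' • p = c • y' - (⟪y', v⟫ : ℝ) • p := by
      rw [hy'v, hy']
      module
    have hcle : |c| ≤ 1 := by
      have := abs_real_inner_le_norm p v
      rw [hpn, hv1, one_mul] at this
      exact this
    have hy'vle : |⟪y', v⟫| ≤ ‖y'‖ := by
      have := abs_real_inner_le_norm y' v
      rw [hv1, mul_one] at this
      exact this
    have hnorm1 : ‖c • r - c' • p‖ ≤ 2*‖y'‖ := by
      rw [hkey]
      calc ‖c • y' - (⟪y', v⟫ : ℝ) • p‖ ≤ ‖c • y'‖ + ‖(⟪y', v⟫ : ℝ) • p‖ := norm_sub_le _ _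
      _ = |c| * ‖y'‖ + |⟪y', v⟫| := by rw [norm_smul, norm_smul, Real.norm_eq_abs,
            Real.norm_eq_abs, hpn, mul_one]
      _ ≤ 1*‖y'‖ + ‖y'‖ := by gcongr
      _ = 2*‖y'‖ := by ring
    have hu1n : ‖u1‖ ≤ 2*‖y'‖/ε := by
      rw [hu1, norm_smul, norm_inv, Real.norm_eq_abs]
      have hinv : |c|⁻¹ ≤ ε⁻¹ := by
        apply inv_anti₀ hε hcx
      calc |c|⁻¹ * ‖c • r - c' • p‖ ≤ ε⁻¹ * (2*‖y'‖) :=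
            mul_le_mul hinv hnorm1 (norm_nonneg _) (by positivity)
      _ = 2*‖y'‖/ε := by ring
    set a := f p with ha
    set b := f r with hb
    have ha0 : a ≠ 0 := hfne p hp0
    have hb0 : b ≠ 0 := hfne r hr0
    have hna : 0 < ‖a‖ := norm_pos_iff.mpr ha0
    have hnb : 0 < ‖b‖ := norm_pos_iff.mpr hb0
    have hblow : ε * ‖f‖ ≤ ‖b‖ := hlow r hrn hcy
    have hba : b - (c⁻¹*c') • a = f u1 := by
      have h1 : f u1 = c⁻¹ • (c • b - c' • a) := by
        rw [hu1, map_smul, map_sub, map_smul, map_smul, ha, hb]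
      rw [h1, smul_sub, smul_smul, smul_smul, inv_mul_cancel₀ hc0, one_smul]
    have hGram : ‖a‖^2*‖b‖^2 - (⟪a, b⟫ : ℝ)^2 ≤ ‖a‖^2 * ‖f u1‖^2 := by
      rw [← hba]
      have hexp2 : ‖b - (c⁻¹*c') • a‖^2
          = ‖b‖^2 - 2*(c⁻¹*c')*(⟪a, b⟫ : ℝ) + (c⁻¹*c')^2*‖a‖^2 := by
        rw [norm_sub_sq_real, real_inner_smul_right, norm_smul, real_inner_comm a b]
        simp only [mul_pow, Real.norm_eq_abs, sq_abs]
        ring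
      exact aux_gram hexp2
    have hfu1 : ‖f u1‖ ≤ σW * (2*‖y'‖/ε) :=
      (hrestr u1 hu1W).trans (mul_le_mul_of_nonneg_left hu1n hσ0.le)
    rw [hexp, hdxy, hxeq, hyeq, hproj, hproj, dproj_mk]
    set R := (1 + 2/ε^2) * (σW/‖f‖) * ‖y'‖ with hR
    have hR0 : 0 ≤ R := by positivity
    have harg : 1 - ((⟪a, b⟫ : ℝ)/(‖a‖*‖b‖))^2 ≤ R^2 := by
      have h1 : 1 - ((⟪a, b⟫ : ℝ)/(‖a‖*‖b‖))^2
          = (‖a‖^2*‖b‖^2 - (⟪a, b⟫ : ℝ)^2)/(‖a‖^2*‖b‖^2) := by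
        field_simp
      rw [h1]
      have hab2 : (0:ℝ) < ‖a‖^2*‖b‖^2 := by positivity
      have h2 : (‖a‖^2*‖b‖^2 - (⟪a, b⟫ : ℝ)^2)/(‖a‖^2*‖b‖^2)
          ≤ (‖a‖^2*‖f u1‖^2)/(‖a‖^2*‖b‖^2) := by gcongr
      have h3 : (‖a‖^2*‖f u1‖^2)/(‖a‖^2*‖b‖^2) = ‖f u1‖^2/‖b‖^2 :=
        mul_div_mul_left _ _ (by positivity)
      have h4 : ‖f u1‖^2/‖b‖^2 ≤ (σW*(2*‖y'‖/ε))^2/((ε*‖f‖)^2) :=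
        div_le_div₀ (by positivity) (pow_le_pow_left₀ (norm_nonneg _) hfu1 2) (by positivity)
          (pow_le_pow_left₀ (by positivity) hblow 2)
      have h5 : (σW*(2*‖y'‖/ε))^2/((ε*‖f‖)^2) = ((2/ε^2)*(σW/‖f‖)*‖y'‖)^2 := by
        field_simp
      have h6 : ((2/ε^2)*(σW/‖f‖)*‖y'‖)^2 ≤ R^2 := by
        apply pow_le_pow_left₀ (by positivity)
        rw [hR]
        have h7 : 2/ε^2 ≤ 1 + 2/ε^2 := by linarith
        apply mul_le_mul_of_nonneg_right _ (norm_nonneg y')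
        exact mul_le_mul_of_nonneg_right h7 (by positivity)
      calc (‖a‖^2*‖b‖^2 - (⟪a, b⟫ : ℝ)^2)/(‖a‖^2*‖b‖^2)
          ≤ (‖a‖^2*‖f u1‖^2)/(‖a‖^2*‖b‖^2) := h2
      _ = ‖f u1‖^2/‖b‖^2 := h3
      _ ≤ (σW*(2*‖y'‖/ε))^2/((ε*‖f‖)^2) := h4
      _ = ((2/ε^2)*(σW/‖f‖)*‖y'‖)^2 := h5
      _ ≤ R^2 := h6
    calc Real.sqrt (1 - ((⟪a, b⟫ : ℝ)/(‖a‖*‖b‖))^2) ≤ Real.sqrt (R^2) :=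
          Real.sqrt_le_sqrt harg
    _ = R := Real.sqrt_sq hR0
  · -- ball claim
    intro x hx
    obtain ⟨p, hp0, hpn, hxeq⟩ := unitRep x
    have hcx : ε ≤ |⟪p, v⟫| := hdecode x p hp0 hpn hxeq hx
    set c := (⟪p, v⟫ : ℝ) with hc
    obtain ⟨hwW, hw2⟩ := hdecomp p hpn
    set w := p - c • v with hw
    have hsplit : p = c • v + w := by rw [hw]; abel
    set a := f p with ha
    have ha0 : a ≠ 0 := hfne p hp0
    have hna : 0 < ‖a‖ := norm_pos_iff.mpr ha0
    have halow : ε * ‖f‖ ≤ ‖a‖ := hlow p hpn hcx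
    have hinner2 : (⟪a, f v⟫ : ℝ) = c * ‖f‖^2 := by
      rw [ha]
      conv_lhs => rw [hsplit]
      rw [map_add, map_smul, inner_add_left, real_inner_smul_left,
        real_inner_comm (f v) (f w), horth w hwW, real_inner_self_eq_norm_sq, hvmax]
      ring
    have hnorma : ‖a‖^2 = c^2*‖f‖^2 + ‖f w‖^2 := by
      rw [ha]
      conv_lhs => rw [hsplit]
      rw [map_add, map_smul, norm_add_sq_real, real_inner_smul_left, horth w hwW, norm_smul]
      simp only [mul_pow, Real.norm_eq_abs, sq_abs, hvmax]
      ring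
    have hwle : ‖w‖ ≤ 1 := aux_wle hw2 (norm_nonneg w)
    have hfw : ‖f w‖ ≤ σW := by
      calc ‖f w‖ ≤ σW * ‖w‖ := hrestr w hwW
      _ ≤ σW * 1 := mul_le_mul_of_nonneg_left hwle hσ0.le
      _ = σW := mul_one _
    rw [hxeq, hproj, dproj_mk, hexp]
    have h1 : 1 - ((⟪a, f v⟫ : ℝ)/(‖a‖*‖f v‖))^2 = ‖f w‖^2/‖a‖^2 := by
      rw [hinner2, hvmax]
      field_simp
      linear_combination hnorma
    rw [h1, show ‖f w‖^2/‖a‖^2 = (‖f w‖/‖a‖)^2 by rw [div_pow],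
      Real.sqrt_sq (by positivity)]
    calc ‖f w‖/‖a‖ ≤ σW/(ε*‖f‖) :=
          div_le_div₀ hσ0.le hfw (by positivity) halow
    _ = (1/ε) * (σW/‖f‖) := by field_simp
    _ ≤ (1 + 2/ε^2) * (σW/‖f‖) := by
          apply mul_le_mul_of_nonneg_right hεD (by positivity)
end

section
/- Let u be the unipotent element of GL(ℝ^d) (d ≥ 2) fixing e₂,…,e_d and sending e₁ to e₁ + v for some v ∈ span(e₂,…,e_d). Then the first singular value of u satisfies μ₁(u) = μ₁(u⁻¹) = ½ log(1 + (‖v‖² + √(‖v‖²(4+‖v‖²)))/2), and consequently μ₁(u) + μ₁(u⁻¹) ≤ log(2(1+‖v‖²)). -/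
open Real RealInnerProductSpace

theorem keylem (t s a c lam : ℝ) (hs : a^2 ≤ s) (hcs : c^2 ≤ (s - a^2)*t^2)
    (h1 : lam*(lam - t^2) = t^2) (h2 : t^2 ≤ lam) :
    s + 2*a*c + a^2*t^2 ≤ (1+lam)*s := by
  have hl0 : 0 ≤ lam := le_trans (sq_nonneg t) h2
  have hm : 0 ≤ lam - t^2 := sub_nonneg.2 h2
  have h1' : a^2*(s-a^2)*(lam*(lam-t^2)) = a^2*(s-a^2)*t^2 := by rw [h1]
  have key : (2*a*c)^2 ≤ (a^2*(lam-t^2) + lam*(s-a^2))^2 := by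
    nlinarith [sq_nonneg (a^2*(lam-t^2) - lam*(s-a^2)), mul_nonneg (sq_nonneg a) (sub_nonneg.2 hcs)]
  have hpos : 0 ≤ a^2*(lam-t^2) + lam*(s-a^2) :=
    add_nonneg (mul_nonneg (sq_nonneg a) hm) (mul_nonneg hl0 (sub_nonneg.2 hs))
  have h2ac : 2*a*c ≤ a^2*(lam-t^2) + lam*(s-a^2) := by
    nlinarith [key, hpos, abs_nonneg (2*a*c)]
  nlinarith [h2ac]

theorem opnorm_aux (d : ℕ) (hd : 2 ≤ d) (v : EuclideanSpace ℝ (Fin d))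
    (hv : v ⟨0, Nat.lt_of_lt_of_le (by norm_num) hd⟩ = 0)
    (w : EuclideanSpace ℝ (Fin d) →L[ℝ] EuclideanSpace ℝ (Fin d))
    (hw : ∀ x : EuclideanSpace ℝ (Fin d), w x = x + (x ⟨0, Nat.lt_of_lt_of_le (by norm_num) hd⟩) • v) :
    ‖w‖ = Real.sqrt (1 + (‖v‖ ^ 2 + Real.sqrt (‖v‖ ^ 2 * (4 + ‖v‖ ^ 2))) / 2) := by
  set i0 : Fin d := ⟨0, Nat.lt_of_lt_of_le (by norm_num) hd⟩ with hi0
  set t : ℝ := ‖v‖ with ht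
  have ht0 : 0 ≤ t := norm_nonneg v
  set lam : ℝ := (t ^ 2 + Real.sqrt (t ^ 2 * (4 + t ^ 2))) / 2 with hlam
  have hr : Real.sqrt (t ^ 2 * (4 + t ^ 2)) ^ 2 = t ^ 2 * (4 + t ^ 2) :=
    Real.sq_sqrt (by positivity)
  have hr0 : 0 ≤ Real.sqrt (t ^ 2 * (4 + t ^ 2)) := Real.sqrt_nonneg _
  have h1 : lam * (lam - t ^ 2) = t ^ 2 := by
    rw [hlam]; nlinarith [hr]
  have h2 : t ^ 2 ≤ lam := by
    have : t ^ 2 ≤ Real.sqrt (t ^ 2 * (4 + t ^ 2)) := by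
      nlinarith [hr, hr0, sq_nonneg t]
    rw [hlam]; linarith
  have hl0 : 0 ≤ lam := le_trans (sq_nonneg t) h2
  have h1l : (0:ℝ) < 1 + lam := by linarith
  set σ : ℝ := Real.sqrt (1 + lam) with hσ
  have hσ0 : 0 ≤ σ := Real.sqrt_nonneg _
  have hσ2 : σ ^ 2 = 1 + lam := Real.sq_sqrt (le_of_lt h1l)
  set e : EuclideanSpace ℝ (Fin d) := EuclideanSpace.single i0 (1:ℝ) with he
  have hev : (inner ℝ e v : ℝ) = 0 := by
    rw [he, EuclideanSpace.inner_single_left]; simp [hv]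
  have hxe : ∀ x : EuclideanSpace ℝ (Fin d), (inner ℝ (x) (e) : ℝ) = x i0 := by
    intro x; rw [he, EuclideanSpace.inner_single_right]; simp
  have hne : ‖e‖ = 1 := by rw [he, EuclideanSpace.norm_single]; simp
  -- norm of w x squared
  have hwx : ∀ x : EuclideanSpace ℝ (Fin d),
      ‖w x‖ ^ 2 = ‖x‖ ^ 2 + 2 * (x i0) * (inner ℝ (x) (v) : ℝ) + (x i0) ^ 2 * t ^ 2 := by
    intro x
    rw [hw x, norm_add_sq_real, real_inner_smul_right, norm_smul]
    simp only [Real.norm_eq_abs, mul_pow, sq_abs, ← ht]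
    ring
  -- Cauchy-Schwarz / Bessel
  have hcsb : ∀ x : EuclideanSpace ℝ (Fin d),
      (x i0) ^ 2 ≤ ‖x‖ ^ 2 ∧ (inner ℝ (x) (v) : ℝ) ^ 2 ≤ (‖x‖ ^ 2 - (x i0) ^ 2) * t ^ 2 := by
    intro x
    set a : ℝ := x i0 with ha
    have hxa : ‖x - a • e‖ ^ 2 = ‖x‖ ^ 2 - a ^ 2 := by
      rw [sub_eq_add_neg, norm_add_sq_real]
      rw [inner_neg_right, real_inner_smul_right, hxe, norm_neg, norm_smul, hne]
      simp [← ha]; ring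
    have hia : (inner ℝ (x - a • e) (v) : ℝ) = (inner ℝ (x) (v) : ℝ) := by
      rw [inner_sub_left, real_inner_smul_left, hev]; ring
    constructor
    · nlinarith [sq_nonneg ‖x - a • e‖, hxa]
    · have := abs_real_inner_le_norm (x - a • e) v
      rw [hia] at this
      have h2 : (inner ℝ (x) (v) : ℝ) ^ 2 ≤ (‖x - a • e‖ * ‖v‖) ^ 2 := by
        rw [← sq_abs]
        exact pow_le_pow_left₀ (abs_nonneg _) this 2
      calc (inner ℝ (x) (v) : ℝ) ^ 2 ≤ (‖x - a • e‖ * ‖v‖) ^ 2 := h2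
        _ = (‖x‖ ^ 2 - a ^ 2) * t ^ 2 := by rw [mul_pow, hxa, ht]
  -- upper bound
  have hub : ‖w‖ ≤ σ := by
    apply ContinuousLinearMap.opNorm_le_bound _ hσ0
    intro x
    have hsq : ‖w x‖ ^ 2 ≤ (σ * ‖x‖) ^ 2 := by
      rw [hwx x, mul_pow, hσ2]
      obtain ⟨hb1, hb2⟩ := hcsb x
      exact keylem t (‖x‖ ^ 2) (x i0) ((inner ℝ (x) (v) : ℝ)) lam hb1 hb2 h1 h2
    exact le_of_pow_le_pow_left₀ two_ne_zero (mul_nonneg hσ0 (norm_nonneg x)) hsq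
  -- lower bound: case on t
  rcases eq_or_lt_of_le ht0 with htz | htpos
  · -- t = 0, so v = 0, w = id
    have hv0 : v = 0 := norm_eq_zero.mp htz.symm
    have hwid : ∀ x : EuclideanSpace ℝ (Fin d), w x = x := by
      intro x; rw [hw x, hv0]; simp
    have hlam0 : lam = 0 := by
      rw [hlam, ← htz]; norm_num
    haveI : Nontrivial (EuclideanSpace ℝ (Fin d)) :=
      nontrivial_of_ne e 0 (by intro h; rw [h] at hne; simp at hne)
    have hwI : w = ContinuousLinearMap.id ℝ (EuclideanSpace ℝ (Fin d)) :=
      ContinuousLinearMap.ext hwid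
    rw [hwI, ContinuousLinearMap.norm_id, hσ, hlam0]
    norm_num
  · -- t > 0
    rw [hσ] at hub ⊢
    refine le_antisymm hub ?_
    set xw : EuclideanSpace ℝ (Fin d) := t ^ 2 • e + (lam - t ^ 2) • v with hxw
    have haw : xw i0 = t ^ 2 := by
      rw [hxw]
      simp [PiLp.add_apply, PiLp.smul_apply, he, EuclideanSpace.single_apply, hv]
    have hcw : (inner ℝ (xw) (v) : ℝ) = (lam - t ^ 2) * t ^ 2 := by
      rw [hxw, inner_add_left, real_inner_smul_left, real_inner_smul_left, hev,
        real_inner_self_eq_norm_sq]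
      rw [← ht]; ring
    have hsw : ‖xw‖ ^ 2 = t ^ 4 + (lam - t ^ 2) ^ 2 * t ^ 2 := by
      rw [hxw, norm_add_sq_real, real_inner_smul_left, real_inner_smul_right, hev,
        norm_smul, norm_smul, hne]
      have hmn : 0 ≤ lam - t ^ 2 := sub_nonneg.2 h2
      rw [Real.norm_eq_abs, Real.norm_eq_abs, abs_of_nonneg (sq_nonneg t), abs_of_nonneg hmn, ← ht]
      ring
    have hwnorm : ‖w xw‖ ^ 2 = (1 + lam) * ‖xw‖ ^ 2 := by
      rw [hwx xw, haw, hcw, hsw]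
      linear_combination (t^2*(t^2 - lam)) * h1
    have hxwne : xw ≠ 0 := by
      intro h
      have : xw i0 = 0 := by rw [h]; rfl
      rw [haw] at this
      nlinarith [htpos]
    have hxwpos : 0 < ‖xw‖ := norm_pos_iff.mpr hxwne
    have heq : ‖w xw‖ = Real.sqrt (1 + lam) * ‖xw‖ := by
      have hsq : (‖w xw‖) ^ 2 = (Real.sqrt (1 + lam) * ‖xw‖) ^ 2 := by
        rw [hwnorm, mul_pow, ← hσ, hσ2]
      calc ‖w xw‖ = Real.sqrt (‖w xw‖ ^ 2) := (Real.sqrt_sq (norm_nonneg _)).symm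
        _ = Real.sqrt ((Real.sqrt (1 + lam) * ‖xw‖) ^ 2) := by rw [hsq]
        _ = Real.sqrt (1 + lam) * ‖xw‖ :=
            Real.sqrt_sq (mul_nonneg (Real.sqrt_nonneg _) (norm_nonneg _))
    have := w.le_opNorm xw
    rw [heq] at this
    exact le_of_mul_le_mul_right (by linarith) hxwpos




/-- Singular value computation for the unipotent `u` fixing `e₂,…,e_d` and sending
`e₁` to `e₁ + v`:  `μ₁(u) = μ₁(u⁻¹) = ½ log(1 + (‖v‖² + √(‖v‖²(4+‖v‖²)))/2)`, hence
`μ₁(u) + μ₁(u⁻¹) ≤ log(2(1+‖v‖²))`.  Here `μ₁(g)` is the log of the operator norm. -/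
theorem stmt12 (d : ℕ) (hd : 2 ≤ d) (v : EuclideanSpace ℝ (Fin d))
    (hv : v ⟨0, by omega⟩ = 0)
    (u : EuclideanSpace ℝ (Fin d) ≃L[ℝ] EuclideanSpace ℝ (Fin d))
    (hu1 : u (EuclideanSpace.single (⟨0, by omega⟩ : Fin d) (1 : ℝ))
      = EuclideanSpace.single (⟨0, by omega⟩ : Fin d) (1 : ℝ) + v)
    (hufix : ∀ x : EuclideanSpace ℝ (Fin d), x ⟨0, by omega⟩ = 0 → u x = x) :
    Real.log ‖(u : EuclideanSpace ℝ (Fin d) →L[ℝ] EuclideanSpace ℝ (Fin d))‖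
        = (1 / 2) * Real.log (1 + (‖v‖ ^ 2 + Real.sqrt (‖v‖ ^ 2 * (4 + ‖v‖ ^ 2))) / 2) ∧
    Real.log ‖(u.symm : EuclideanSpace ℝ (Fin d) →L[ℝ] EuclideanSpace ℝ (Fin d))‖
        = (1 / 2) * Real.log (1 + (‖v‖ ^ 2 + Real.sqrt (‖v‖ ^ 2 * (4 + ‖v‖ ^ 2))) / 2) ∧
    Real.log ‖(u : EuclideanSpace ℝ (Fin d) →L[ℝ] EuclideanSpace ℝ (Fin d))‖
        + Real.log ‖(u.symm : EuclideanSpace ℝ (Fin d) →L[ℝ] EuclideanSpace ℝ (Fin d))‖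
      ≤ Real.log (2 * (1 + ‖v‖ ^ 2)) := by
  set i0 : Fin d := ⟨0, by omega⟩ with hi0
  set e : EuclideanSpace ℝ (Fin d) := EuclideanSpace.single i0 (1:ℝ) with he
  have hu' : ∀ x : EuclideanSpace ℝ (Fin d),
      (u : EuclideanSpace ℝ (Fin d) →L[ℝ] EuclideanSpace ℝ (Fin d)) x = x + (x i0) • v := by
    intro x
    have hx0 : (x - (x i0) • e) i0 = 0 := by
      simp [he, PiLp.sub_apply, PiLp.smul_apply, EuclideanSpace.single_apply]
    have hfix := hufix _ hx0
    have h1 : u x = u ((x - (x i0) • e) + (x i0) • e) := by congr 1; abel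
    show u x = _
    rw [h1, map_add, map_smul, hfix, hu1, smul_add]
    abel
  have hsym : ∀ x : EuclideanSpace ℝ (Fin d),
      (u.symm : EuclideanSpace ℝ (Fin d) →L[ℝ] EuclideanSpace ℝ (Fin d)) x
        = x + (x i0) • (-v) := by
    intro x
    show u.symm x = _
    apply u.injective
    rw [u.apply_symm_apply]
    have h0 : (x + (x i0) • (-v)) i0 = x i0 := by
      simp [PiLp.add_apply, PiLp.smul_apply, hv]
    have key : (u : EuclideanSpace ℝ (Fin d) →L[ℝ] EuclideanSpace ℝ (Fin d))
        (x + (x i0) • (-v)) = x := by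
      rw [hu' (x + (x i0) • (-v)), h0, smul_neg]
      abel
    exact key.symm
  have hvneg : (-v) i0 = 0 := by simp [hv]
  have hA := opnorm_aux d hd v hv
    (u : EuclideanSpace ℝ (Fin d) →L[ℝ] EuclideanSpace ℝ (Fin d)) hu'
  have hB := opnorm_aux d hd (-v) hvneg
    (u.symm : EuclideanSpace ℝ (Fin d) →L[ℝ] EuclideanSpace ℝ (Fin d)) hsym
  rw [norm_neg] at hB
  set t : ℝ := ‖v‖ with ht
  have ht0 : 0 ≤ t := norm_nonneg v
  have hr0 : 0 ≤ Real.sqrt (t ^ 2 * (4 + t ^ 2)) := Real.sqrt_nonneg _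
  have hr : Real.sqrt (t ^ 2 * (4 + t ^ 2)) ^ 2 = t ^ 2 * (4 + t ^ 2) :=
    Real.sq_sqrt (by positivity)
  set X : ℝ := 1 + (t ^ 2 + Real.sqrt (t ^ 2 * (4 + t ^ 2))) / 2 with hX
  have hX0 : 0 < X := by rw [hX]; positivity
  have hlog : Real.log (Real.sqrt X) = (1 / 2) * Real.log X := by
    rw [Real.log_sqrt hX0.le]; ring
  refine ⟨by rw [hA, hlog], by rw [hB, hlog], ?_⟩
  rw [hA, hB, hlog]
  have hle : X ≤ 2 * (1 + t ^ 2) := by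
    rw [hX]
    nlinarith [hr, hr0, sq_nonneg t]
  calc (1/2) * Real.log X + (1/2) * Real.log X = Real.log X := by ring
    _ ≤ Real.log (2 * (1 + t ^ 2)) := Real.log_le_log hX0 hle
end

section
/- Let V be a Euclidean space of dimension d ≥ 2 and r ≥ ε > 0. If g ∈ GL(V) is (r,ε)-proximal in ℙ(V), then μ₁(g) − |log(2r²)| ≤ λ₁(g) ≤ μ₁(g), where λ₁(g) = log(spectral radius of g) and μ₁(g) = log(operator norm of g). -/
/-- `λ₁(g)`: the logarithm of the spectral radius, via the Gelfand formula
`λ₁(g) = lim (1/n) log ‖gⁿ‖`. -/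
noncomputable def lambda1 {d : ℕ}
    (g : EuclideanSpace ℝ (Fin d) ≃L[ℝ] EuclideanSpace ℝ (Fin d)) : ℝ :=
  Filter.atTop.liminf (fun n : ℕ =>
    Real.log ‖((g ^ n : EuclideanSpace ℝ (Fin d) ≃L[ℝ] EuclideanSpace ℝ (Fin d)) :
      EuclideanSpace ℝ (Fin d) →L[ℝ] EuclideanSpace ℝ (Fin d))‖ / n)

namespace Stmt14Aux

lemma ga_ne {d : ℕ} (g : EuclideanSpace ℝ (Fin d) ≃L[ℝ] EuclideanSpace ℝ (Fin d))
    {a : EuclideanSpace ℝ (Fin d)} (ha : a ≠ 0) : g a ≠ 0 := by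
  intro h
  apply ha
  have := congrArg g.symm h
  simpa using this

lemma projAct_mk {d : ℕ} (g : EuclideanSpace ℝ (Fin d) ≃L[ℝ] EuclideanSpace ℝ (Fin d))
    (a : EuclideanSpace ℝ (Fin d)) (ha : a ≠ 0) :
    projAct g (Projectivization.mk ℝ a ha) = Projectivization.mk ℝ (g a) (ga_ne g ha) := rfl

lemma dproj_mk {d : ℕ} (a b : EuclideanSpace ℝ (Fin d)) (ha : a ≠ 0) (hb : b ≠ 0) :
    dproj (Projectivization.mk ℝ a ha) (Projectivization.mk ℝ b hb) =
      Real.sqrt (1 - ((inner ℝ a b : ℝ) / (‖a‖ * ‖b‖)) ^ 2) := by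
  obtain ⟨s, hs⟩ := Projectivization.exists_smul_eq_mk_rep ℝ a ha
  obtain ⟨t, ht⟩ := Projectivization.exists_smul_eq_mk_rep ℝ b hb
  unfold dproj
  rw [← hs, ← ht]
  have hs0 : (s : ℝ) ≠ 0 := Units.ne_zero s
  have ht0 : (t : ℝ) ≠ 0 := Units.ne_zero t
  have hna : ‖a‖ ≠ 0 := norm_ne_zero_iff.mpr ha
  have hnb : ‖b‖ ≠ 0 := norm_ne_zero_iff.mpr hb
  congr 1
  rw [Units.smul_def, Units.smul_def, real_inner_smul_left, real_inner_smul_right,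
    norm_smul, norm_smul]
  simp only [div_pow, mul_pow, Real.norm_eq_abs, sq_abs]
  field_simp

lemma cancel_aux {T D NB E NA : ℝ} (hT : 0 < T) (h : T * D * NB ≤ E * T * NA) :
    D * NB ≤ E * NA := by
  nlinarith [h, hT]

lemma arith1 {x y c r ε : ℝ} (h4 : (2 * r) ^ 2 * x ^ 2 ≤ x ^ 2 - y ^ 2)
    (key : x ^ 2 - y ^ 2 ≤ ε ^ 2 * c ^ 2) (hε : 0 < ε) (hεr : ε ≤ r) (hx : 0 ≤ x) :
    x ≤ |c| / 2 := by
  have hr : 0 < r := lt_of_lt_of_le hε hεr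
  have h1 : ε ^ 2 ≤ r ^ 2 := by nlinarith
  have h2 : 4 * x ^ 2 ≤ c ^ 2 := by nlinarith [mul_pos hr hr, sq_nonneg c, sq_nonneg x]
  have h3 : x ≤ Real.sqrt (c ^ 2 / 4) := by
    rw [← Real.sqrt_sq hx]
    exact Real.sqrt_le_sqrt (by nlinarith)
  rwa [show c ^ 2 / 4 = (|c| / 2) ^ 2 by rw [div_pow, sq_abs]; norm_num,
    Real.sqrt_sq (by positivity)] at h3

lemma arith2 {A C U W G r : ℝ} (hgu : G ≤ A * C + C / 2 * W) (ha : A * (2 * r) ≤ U)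
    (hwu : W ≤ U + A) (h2r1 : 2 * r ≤ 1) (hr : 0 < r) (hC : 0 ≤ C) (hU : 0 ≤ U)
    (hA : 0 ≤ A) (hW : 0 ≤ W) (hG : 0 ≤ G) : G * (2 * r ^ 2) ≤ C * U := by
  nlinarith [mul_le_mul_of_nonneg_left ha (mul_nonneg hr.le hC),
    mul_le_mul_of_nonneg_left hwu (mul_nonneg (mul_nonneg hr.le hr.le) hC),
    mul_le_mul_of_nonneg_right hgu (by positivity : (0:ℝ) ≤ 2 * r ^ 2),
    mul_nonneg (mul_nonneg hr.le hC) hU, mul_nonneg hC hU, mul_nonneg hA hC,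
    mul_le_mul_of_nonneg_left ha (mul_nonneg (mul_nonneg hr.le hr.le) hC),
    mul_nonneg (mul_nonneg hC hU) hr.le]

end Stmt14Aux

open Projectivization RealInnerProductSpace in
set_option maxHeartbeats 4000000 in
/-- Corollary 2.5: if `g` is `(r,ε)`-proximal in `ℙ(V)`, then
`μ₁(g) − |log 2r²| ≤ λ₁(g) ≤ μ₁(g)`. -/
theorem stmt14 (d : ℕ) (hd : 2 ≤ d) (r ε : ℝ) (hε : 0 < ε) (hεr : ε ≤ r)
    (g : EuclideanSpace ℝ (Fin d) ≃L[ℝ] EuclideanSpace ℝ (Fin d))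
    (xplus : Projectivization ℝ (EuclideanSpace ℝ (Fin d)))
    (Xm : Submodule ℝ (EuclideanSpace ℝ (Fin d)))
    -- g is proximal with attracting fixed point xplus and repelling hyperplane Xm:
    (hXrank : Module.finrank ℝ Xm = d - 1)
    (hfix : projAct g xplus = xplus)
    (hinv : ∀ v : EuclideanSpace ℝ (Fin d), v ∈ Xm → g v ∈ Xm)
    (hattract : ∀ y : Projectivization ℝ (EuclideanSpace ℝ (Fin d)), ¬ y.submodule ≤ Xm →
      Filter.Tendsto (fun n : ℕ => dproj ((projAct g)^[n] y) xplus)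
        Filter.atTop (nhds 0))
    -- and (r,ε)-proximal:
    (hsep : ∀ z : Projectivization ℝ (EuclideanSpace ℝ (Fin d)),
      z.submodule ≤ Xm → 2 * r ≤ dproj xplus z)
    (hmap : ∀ x : Projectivization ℝ (EuclideanSpace ℝ (Fin d)),
      (∀ z, z.submodule ≤ Xm → ε ≤ dproj x z) → dproj (projAct g x) xplus ≤ ε)
    (hlip : ∀ x y : Projectivization ℝ (EuclideanSpace ℝ (Fin d)),
      (∀ z, z.submodule ≤ Xm → ε ≤ dproj x z) →
      (∀ z, z.submodule ≤ Xm → ε ≤ dproj y z) →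
      dproj (projAct g x) (projAct g y) ≤ ε * dproj x y) :
    mu1 g - |Real.log (2 * r ^ 2)| ≤ lambda1 g ∧ lambda1 g ≤ mu1 g := by
  have hr : 0 < r := lt_of_lt_of_le hε hεr
  have hdim : Module.finrank ℝ (EuclideanSpace ℝ (Fin d)) = d := finrank_euclideanSpace_fin
  -- dproj is at most 1
  have dproj_le_one : ∀ x y : Projectivization ℝ (EuclideanSpace ℝ (Fin d)), dproj x y ≤ 1 := by
    intro x y
    unfold dproj
    refine (Real.sqrt_le_sqrt ?_).trans_eq Real.sqrt_one
    nlinarith [sq_nonneg ((inner ℝ x.rep y.rep : ℝ) / (‖x.rep‖ * ‖y.rep‖))]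
  -- Xm is a proper nonzero subspace
  have hXm_netop : Xm ≠ ⊤ := by
    intro h
    rw [h, finrank_top, hdim] at hXrank
    omega
  have hXm_nebot : Xm ≠ ⊥ := by
    intro h
    rw [h, finrank_bot] at hXrank
    omega
  obtain ⟨w₀, hw₀m, hw₀⟩ := Submodule.exists_mem_ne_zero_of_ne_bot hXm_nebot
  have hz_sub : ∀ (w : EuclideanSpace ℝ (Fin d)) (hw0 : w ≠ 0), w ∈ Xm →
      (Projectivization.mk ℝ w hw0).submodule ≤ Xm := by
    intro w hw0 hw
    rw [Projectivization.submodule_mk]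
    rwa [Submodule.span_singleton_le_iff_mem]
  have h2r1 : 2 * r ≤ 1 := le_trans (hsep _ (hz_sub w₀ hw₀ hw₀m)) (dproj_le_one _ _)
  have hrep_mem : ∀ z : Projectivization ℝ (EuclideanSpace ℝ (Fin d)),
      z.submodule ≤ Xm → z.rep ∈ Xm := by
    intro z hz
    apply hz
    rw [Projectivization.submodule_eq]
    exact Submodule.mem_span_singleton_self _
  -- the unit normal φ to Xm
  have horthrank : Module.finrank ℝ Xmᗮ = 1 := by
    have h1 := Submodule.finrank_add_finrank_orthogonal Xm
    rw [hXrank, hdim] at h1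
    omega
  obtain ⟨ψ, hψm, hψ0⟩ := Submodule.exists_mem_ne_zero_of_ne_bot (p := Xmᗮ)
    (by intro h; rw [h, finrank_bot] at horthrank; omega)
  obtain ⟨φ, hφ0, hφn, hφm⟩ : ∃ φ : EuclideanSpace ℝ (Fin d), φ ≠ 0 ∧ ‖φ‖ = 1 ∧ φ ∈ Xmᗮ :=
    ⟨‖ψ‖⁻¹ • ψ, smul_ne_zero (inv_ne_zero (norm_ne_zero_iff.mpr hψ0)) hψ0,
      norm_smul_inv_norm hψ0, Submodule.smul_mem _ _ hψm⟩
  have hXφ : ∀ w ∈ Xm, ⟪w, φ⟫ = 0 := fun w hw => (Submodule.mem_orthogonal Xm φ).mp hφm w hw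
  have hXφ' : ∀ w ∈ Xm, ⟪φ, w⟫ = 0 := fun w hw => by
    rw [real_inner_comm]; exact hXφ w hw
  have hspan : (ℝ ∙ φ) = Xmᗮ := by
    apply Submodule.eq_of_le_of_finrank_le
    · rwa [Submodule.span_singleton_le_iff_mem]
    · rw [horthrank, finrank_span_singleton hφ0]
  have hmemXm : ∀ u : EuclideanSpace ℝ (Fin d), ⟪u, φ⟫ = 0 → u ∈ Xm := by
    intro u hu
    have hXmO : Xm = (ℝ ∙ φ)ᗮ := by rw [hspan, Submodule.orthogonal_orthogonal]
    rw [hXmO]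
    exact Submodule.mem_orthogonal_singleton_iff_inner_left.mpr hu
  -- the fixed unit vector v
  have hv₀ : xplus.rep ≠ 0 := Projectivization.rep_nonzero xplus
  obtain ⟨v, hv0, hvn, hmkv⟩ : ∃ v : EuclideanSpace ℝ (Fin d), ∃ hv0 : v ≠ 0,
      ‖v‖ = 1 ∧ Projectivization.mk ℝ v hv0 = xplus := by
    refine ⟨‖xplus.rep‖⁻¹ • xplus.rep,
      smul_ne_zero (inv_ne_zero (norm_ne_zero_iff.mpr hv₀)) hv₀,
      norm_smul_inv_norm hv₀, ?_⟩
    conv_rhs => rw [← Projectivization.mk_rep xplus]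
    rw [Projectivization.mk_eq_mk_iff']
    exact ⟨‖xplus.rep‖⁻¹, rfl⟩
  have hvv : ⟪v, v⟫ = 1 := by rw [real_inner_self_eq_norm_sq, hvn]; norm_num
  -- eigenvalue c
  obtain ⟨c, hc0, hgv⟩ : ∃ c : ℝ, c ≠ 0 ∧ g v = c • v := by
    have h1 : projAct g (Projectivization.mk ℝ v hv0) = Projectivization.mk ℝ v hv0 := by
      rw [hmkv, hfix]
    rw [Stmt14Aux.projAct_mk] at h1
    obtain ⟨cu, hcu⟩ := (Projectivization.mk_eq_mk_iff ℝ _ _ _ _).mp h1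
    exact ⟨(cu : ℝ), Units.ne_zero cu, by rw [← hcu, Units.smul_def]⟩
  -- pythagoras helper
  have hpyth : ∀ a : EuclideanSpace ℝ (Fin d),
      ‖a - ⟪a, φ⟫ • φ‖ ^ 2 = ‖a‖ ^ 2 - ⟪a, φ⟫ ^ 2 := by
    intro a
    rw [norm_sub_sq_real, real_inner_smul_right, norm_smul, hφn, Real.norm_eq_abs]
    ring_nf
    rw [sq_abs]
    ring
  -- 2r ≤ |⟪v,φ⟫|
  have hvφ : 2 * r ≤ |⟪v, φ⟫| := by
    set p := v - ⟪v, φ⟫ • φ with hpdef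
    have hpφ : ⟪p, φ⟫ = 0 := by
      rw [hpdef, inner_sub_left, real_inner_smul_left, real_inner_self_eq_norm_sq, hφn]
      ring
    have hpXm : p ∈ Xm := hmemXm p hpφ
    have hnorm : ‖p‖ ^ 2 = 1 - ⟪v, φ⟫ ^ 2 := by
      rw [hpdef, hpyth v, hvn]; norm_num
    by_cases hp : p = 0
    · have h1 : ⟪v, φ⟫ ^ 2 = 1 := by
        rw [hp, norm_zero] at hnorm
        rw [show ((0:ℝ))^2 = 0 by norm_num] at hnorm
        linarith
      have h2 : |⟪v, φ⟫| = 1 := by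
        nlinarith [abs_nonneg ⟪v, φ⟫, sq_abs ⟪v, φ⟫]
      linarith
    · have hs := hsep (Projectivization.mk ℝ p hp) (hz_sub p hp hpXm)
      rw [← hmkv, Stmt14Aux.dproj_mk] at hs
      have hvp : ⟪v, p⟫ = ‖p‖ ^ 2 := by
        have hveq : v = p + ⟪v, φ⟫ • φ := by rw [hpdef]; abel
        have hφp : ⟪φ, p⟫ = 0 := by rw [real_inner_comm]; exact hpφ
        rw [hveq, inner_add_left, real_inner_smul_left, hφp, real_inner_self_eq_norm_sq]
        ring
      have hp0 : ‖p‖ ≠ 0 := norm_ne_zero_iff.mpr hp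
      have hq : (⟪v, p⟫ / (‖v‖ * ‖p‖)) ^ 2 = ‖p‖ ^ 2 := by
        rw [hvp, hvn]
        field_simp
      rw [hq, show (1 : ℝ) - ‖p‖ ^ 2 = ⟪v, φ⟫ ^ 2 by linarith, Real.sqrt_sq_eq_abs] at hs
      exact hs
  have hvφ0 : ⟪v, φ⟫ ≠ 0 := by
    intro h
    rw [h, abs_zero] at hvφ
    linarith
  -- membership criterion for the good set
  have hG : ∀ (a : EuclideanSpace ℝ (Fin d)) (ha : a ≠ 0), ε * ‖a‖ ≤ |⟪a, φ⟫| →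
      ∀ z, z.submodule ≤ Xm → ε ≤ dproj (Projectivization.mk ℝ a ha) z := by
    intro a ha hcrit z hz
    have hw : z.rep ∈ Xm := hrep_mem z hz
    have hw0 : z.rep ≠ 0 := z.rep_nonzero
    rw [← Projectivization.mk_rep z, Stmt14Aux.dproj_mk]
    set w := z.rep with hwdef
    have key : ⟪a, w⟫ ^ 2 ≤ (‖a‖ ^ 2 - ⟪a, φ⟫ ^ 2) * ‖w‖ ^ 2 := by
      have h1 : ⟪a, w⟫ = ⟪a - ⟪a, φ⟫ • φ, w⟫ := by
        rw [inner_sub_left, real_inner_smul_left, hXφ' w hw]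
        ring
      rw [h1]
      have h2 := abs_real_inner_le_norm (a - ⟪a, φ⟫ • φ) w
      nlinarith [hpyth a, sq_abs ⟪a - ⟪a, φ⟫ • φ, w⟫, norm_nonneg w,
        norm_nonneg (a - ⟪a, φ⟫ • φ), mul_self_le_mul_self (abs_nonneg _) h2]
    apply Real.le_sqrt_of_sq_le
    have hna : (0:ℝ) < ‖a‖ := norm_pos_iff.mpr ha
    have hnw : (0:ℝ) < ‖w‖ := norm_pos_iff.mpr hw0
    have hc2 : ε ^ 2 * ‖a‖ ^ 2 ≤ ⟪a, φ⟫ ^ 2 := by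
      nlinarith [sq_abs ⟪a, φ⟫, mul_nonneg hε.le (norm_nonneg a)]
    have hq : (⟪a, w⟫ / (‖a‖ * ‖w‖)) ^ 2 ≤ 1 - ε ^ 2 := by
      rw [div_pow, div_le_iff₀ (by positivity)]
      nlinarith [key, sq_nonneg ‖w‖]
    linarith
  -- distance from Xm vectors to the v direction
  have hXmv : ∀ h : EuclideanSpace ℝ (Fin d), h ∈ Xm →
      (2 * r) ^ 2 * ‖h‖ ^ 2 ≤ ‖h‖ ^ 2 - ⟪h, v⟫ ^ 2 := by
    intro h hh
    set p := v - ⟪v, φ⟫ • φ with hpdef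
    have hnorm : ‖p‖ ^ 2 = 1 - ⟪v, φ⟫ ^ 2 := by
      rw [hpdef, hpyth v, hvn]; norm_num
    have h1 : ⟪h, v⟫ = ⟪h, p⟫ := by
      rw [hpdef, inner_sub_right, real_inner_smul_right, hXφ h hh]
      ring
    have h2 := abs_real_inner_le_norm h p
    have h3 : ⟪h, v⟫ ^ 2 ≤ ‖h‖ ^ 2 * ‖p‖ ^ 2 := by
      rw [h1]
      nlinarith [sq_abs ⟪h, p⟫, mul_self_le_mul_self (abs_nonneg ⟪h, p⟫) h2,
        norm_nonneg h, norm_nonneg p]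
    have h4 : (2 * r) ^ 2 ≤ ⟪v, φ⟫ ^ 2 := by
      nlinarith [mul_self_le_mul_self (by linarith : (0:ℝ) ≤ 2 * r) hvφ, sq_abs ⟪v, φ⟫]
    nlinarith [mul_le_mul_of_nonneg_left h4 (sq_nonneg ‖h‖), h3, hnorm, sq_nonneg ‖h‖]
  -- expansion helper
  have expand : ∀ (x y : EuclideanSpace ℝ (Fin d)) (s u : ℝ),
      ‖s • x + u • y‖ ^ 2 = s ^ 2 * ‖x‖ ^ 2 + 2 * s * u * ⟪x, y⟫ + u ^ 2 * ‖y‖ ^ 2 := by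
    intro x y s u
    rw [← real_inner_self_eq_norm_sq, ← real_inner_self_eq_norm_sq, ← real_inner_self_eq_norm_sq]
    simp only [inner_add_left, inner_add_right, real_inner_smul_left, real_inner_smul_right]
    rw [real_inner_comm y x]
    ring
  -- contraction on Xm
  have hcontr : ∀ w : EuclideanSpace ℝ (Fin d), w ∈ Xm → ‖w‖ = 1 → ‖g w‖ ≤ |c| / 2 := by
    intro w hw hwn
    obtain ⟨h, hh⟩ : ∃ h : EuclideanSpace ℝ (Fin d), g w = h := ⟨g w, rfl⟩
    have hhXm : h ∈ Xm := hh ▸ hinv w hw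
    rw [hh]
    have key : ‖h‖ ^ 2 - ⟪h, v⟫ ^ 2 ≤ ε ^ 2 * c ^ 2 := by
      have htend : Filter.Tendsto (fun t : ℝ => ε ^ 2 * (‖c • v + t • h‖ ^ 2 / ‖v + t • w‖ ^ 2))
          (nhdsWithin 0 (Set.Ioi 0)) (nhds (ε ^ 2 * c ^ 2)) := by
        have h1 : Filter.Tendsto (fun t : ℝ => ‖c • v + t • h‖ ^ 2) (nhds 0) (nhds (c ^ 2)) := by
          have hcont : Continuous (fun t : ℝ => ‖c • v + t • h‖ ^ 2) :=
            ((continuous_const.add (continuous_id.smul continuous_const)).norm).pow 2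
          have h2 := hcont.tendsto 0
          have h3 : ‖c • v + (0:ℝ) • h‖ ^ 2 = c ^ 2 := by
            rw [zero_smul, add_zero, norm_smul, hvn, Real.norm_eq_abs, mul_one, sq_abs]
          rwa [h3] at h2
        have h2 : Filter.Tendsto (fun t : ℝ => ‖v + t • w‖ ^ 2) (nhds 0) (nhds 1) := by
          have hcont : Continuous (fun t : ℝ => ‖v + t • w‖ ^ 2) :=
            ((continuous_const.add (continuous_id.smul continuous_const)).norm).pow 2
          have h2 := hcont.tendsto 0
          have h3 : ‖v + (0:ℝ) • w‖ ^ 2 = 1 := by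
            rw [zero_smul, add_zero, hvn]; norm_num
          rwa [h3] at h2
        have h4 := (h1.div h2 (by norm_num)).const_mul (ε ^ 2)
        have h5 : ε ^ 2 * (c ^ 2 / 1) = ε ^ 2 * c ^ 2 := by ring
        rw [h5] at h4
        exact h4.mono_left nhdsWithin_le_nhds
      apply ge_of_tendsto htend
      have hIoc : Set.Ioc (0:ℝ) 1 ∈ nhdsWithin (0:ℝ) (Set.Ioi 0) :=
        Ioc_mem_nhdsGT_of_mem ⟨le_refl 0, zero_lt_one⟩
      filter_upwards [hIoc] with t ht
      obtain ⟨ht0, ht1⟩ := ht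
      have hBφ : ⟪v + t • w, φ⟫ = ⟪v, φ⟫ := by
        rw [inner_add_left, real_inner_smul_left, hXφ w hw]
        ring
      have hAφ : ⟪c • v + t • h, φ⟫ = c * ⟪v, φ⟫ := by
        rw [inner_add_left, real_inner_smul_left, real_inner_smul_left, hXφ h hhXm]
        ring
      have hB0 : v + t • w ≠ 0 := by
        intro hB
        rw [hB, inner_zero_left] at hBφ
        exact hvφ0 hBφ.symm
      have hA0 : c • v + t • h ≠ 0 := by
        intro hA
        rw [hA, inner_zero_left] at hAφ
        exact mul_ne_zero hc0 hvφ0 hAφ.symm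
      have hBnorm : ‖v + t • w‖ ≤ 2 := by
        calc ‖v + t • w‖ ≤ ‖v‖ + ‖t • w‖ := norm_add_le _ _
        _ = 1 + t := by
            rw [hvn, norm_smul, hwn, Real.norm_eq_abs, abs_of_pos ht0, mul_one]
        _ ≤ 2 := by linarith
      have hBG : ∀ z, z.submodule ≤ Xm → ε ≤ dproj (Projectivization.mk ℝ (v + t • w) hB0) z := by
        apply hG
        rw [hBφ]
        nlinarith [mul_le_mul_of_nonneg_left hBnorm hε.le, hvφ]
      have hvG : ∀ z, z.submodule ≤ Xm → ε ≤ dproj (Projectivization.mk ℝ v hv0) z := by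
        apply hG
        rw [hvn, mul_one]
        linarith
      have hl := hlip _ _ hBG hvG
      rw [Stmt14Aux.projAct_mk, Stmt14Aux.projAct_mk] at hl
      have hgB : Projectivization.mk ℝ (g (v + t • w)) (Stmt14Aux.ga_ne g hB0) =
          Projectivization.mk ℝ (c • v + t • h) hA0 := by
        rw [Projectivization.mk_eq_mk_iff']
        refine ⟨1, ?_⟩
        rw [one_smul, map_add, map_smul, hgv, hh]
      have hgv' : Projectivization.mk ℝ (g v) (Stmt14Aux.ga_ne g hv0) =
          Projectivization.mk ℝ v hv0 := by
        rw [Projectivization.mk_eq_mk_iff']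
        exact ⟨c, hgv.symm⟩
      rw [hgB, hgv'] at hl
      rw [Stmt14Aux.dproj_mk, Stmt14Aux.dproj_mk, hvn, mul_one, mul_one] at hl
      -- square the inequality
      have hX1 : (0:ℝ) ≤ 1 - (⟪c • v + t • h, v⟫ / ‖c • v + t • h‖) ^ 2 := by
        have h6 := abs_real_inner_div_norm_mul_norm_le_one (c • v + t • h) v
        rw [hvn, mul_one] at h6
        nlinarith [sq_abs (⟪c • v + t • h, v⟫ / ‖c • v + t • h‖),
          mul_self_le_mul_self (abs_nonneg (⟪c • v + t • h, v⟫ / ‖c • v + t • h‖)) h6]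
      have hX2 : (0:ℝ) ≤ 1 - (⟪v + t • w, v⟫ / ‖v + t • w‖) ^ 2 := by
        have h6 := abs_real_inner_div_norm_mul_norm_le_one (v + t • w) v
        rw [hvn, mul_one] at h6
        nlinarith [sq_abs (⟪v + t • w, v⟫ / ‖v + t • w‖),
          mul_self_le_mul_self (abs_nonneg (⟪v + t • w, v⟫ / ‖v + t • w‖)) h6]
      have hsq := mul_self_le_mul_self (Real.sqrt_nonneg _) hl
      rw [Real.mul_self_sqrt hX1] at hsq
      have hrhs : ε * Real.sqrt (1 - (⟪v + t • w, v⟫ / ‖v + t • w‖) ^ 2) *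
          (ε * Real.sqrt (1 - (⟪v + t • w, v⟫ / ‖v + t • w‖) ^ 2)) =
          ε ^ 2 * (1 - (⟪v + t • w, v⟫ / ‖v + t • w‖) ^ 2) := by
        rw [show ∀ a b : ℝ, a * b * (a * b) = a ^ 2 * (b * b) from by intros; ring,
          Real.mul_self_sqrt hX2]
      rw [hrhs] at hsq
      -- algebraic identities
      have hnA : (0:ℝ) < ‖c • v + t • h‖ := norm_pos_iff.mpr hA0
      have hnB : (0:ℝ) < ‖v + t • w‖ := norm_pos_iff.mpr hB0
      have hAA : ‖c • v + t • h‖ ^ 2 = c ^ 2 + 2 * c * t * ⟪v, h⟫ + t ^ 2 * ‖h‖ ^ 2 := by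
        have := expand v h c t
        rw [this, hvn]
        try ring
      have hBB : ‖v + t • w‖ ^ 2 = 1 + 2 * t * ⟪v, w⟫ + t ^ 2 * ‖w‖ ^ 2 := by
        have := expand v w 1 t
        rw [one_smul] at this
        rw [this, hvn]
        try ring
      have hIA : ⟪c • v + t • h, v⟫ = c + t * ⟪h, v⟫ := by
        rw [inner_add_left, real_inner_smul_left, real_inner_smul_left, hvv]
        try ring
      have hIB : ⟪v + t • w, v⟫ = 1 + t * ⟪w, v⟫ := by
        rw [inner_add_left, real_inner_smul_left, hvv]
        try ring
      have eA : ‖c • v + t • h‖ ^ 2 - ⟪c • v + t • h, v⟫ ^ 2 =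
          t ^ 2 * (‖h‖ ^ 2 - ⟪h, v⟫ ^ 2) := by
        rw [hAA, hIA, real_inner_comm v h]; ring
      have eB : ‖v + t • w‖ ^ 2 - ⟪v + t • w, v⟫ ^ 2 ≤ t ^ 2 := by
        rw [hBB, hIB, real_inner_comm v w]
        have hww : ‖w‖ ^ 2 = 1 := by rw [hwn]; norm_num
        rw [hww]
        nlinarith [sq_nonneg (t * ⟪v, w⟫)]
      -- convert hsq to polynomial form
      have hre1 : 1 - (⟪c • v + t • h, v⟫ / ‖c • v + t • h‖) ^ 2 =
          (‖c • v + t • h‖ ^ 2 - ⟪c • v + t • h, v⟫ ^ 2) / ‖c • v + t • h‖ ^ 2 := by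
        field_simp
      have hre2 : 1 - (⟪v + t • w, v⟫ / ‖v + t • w‖) ^ 2 =
          (‖v + t • w‖ ^ 2 - ⟪v + t • w, v⟫ ^ 2) / ‖v + t • w‖ ^ 2 := by
        field_simp
      rw [hre1, hre2, mul_div_assoc'] at hsq
      have hpoly := (div_le_div_iff₀ (pow_pos hnA 2) (pow_pos hnB 2)).mp hsq
      -- hpoly : (nA² - IA²) * nB² ≤ ε² * (nB² - IB²) * nA²
      rw [eA] at hpoly
      have hstep : ε ^ 2 * (‖v + t • w‖ ^ 2 - ⟪v + t • w, v⟫ ^ 2) * ‖c • v + t • h‖ ^ 2 ≤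
          ε ^ 2 * t ^ 2 * ‖c • v + t • h‖ ^ 2 := by
        have := mul_le_mul_of_nonneg_right
          (mul_le_mul_of_nonneg_left eB (sq_nonneg ε)) (sq_nonneg ‖c • v + t • h‖)
        linarith
      have hfin : t ^ 2 * (‖h‖ ^ 2 - ⟪h, v⟫ ^ 2) * ‖v + t • w‖ ^ 2 ≤
          ε ^ 2 * t ^ 2 * ‖c • v + t • h‖ ^ 2 := le_trans hpoly hstep
      have ht2 : (0:ℝ) < t ^ 2 := pow_pos ht0 2
      have hnB2 : (0:ℝ) < ‖v + t • w‖ ^ 2 := pow_pos hnB 2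
      have hgoal : (‖h‖ ^ 2 - ⟪h, v⟫ ^ 2) * ‖v + t • w‖ ^ 2 ≤ ε ^ 2 * ‖c • v + t • h‖ ^ 2 :=
        Stmt14Aux.cancel_aux ht2 hfin
      exact le_of_le_of_eq ((le_div_iff₀ hnB2).mpr hgoal) (mul_div_assoc _ _ _)
    -- conclude
    exact Stmt14Aux.arith1 (hXmv h hhXm) key hε hεr (norm_nonneg h)
  -- operator norm bound
  have hbound : ∀ u : EuclideanSpace ℝ (Fin d), ‖g u‖ * (2 * r ^ 2) ≤ |c| * ‖u‖ := by
    intro u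
    have htop : (ℝ ∙ v) ⊔ Xm = ⊤ := by
      by_contra hne
      have hlt : (ℝ ∙ v) ⊔ Xm < ⊤ := Ne.lt_top hne
      have h1 := Submodule.finrank_lt (K := ℝ) (V := EuclideanSpace ℝ (Fin d)) hlt.ne
      rw [hdim] at h1
      have h2 : Xm = (ℝ ∙ v) ⊔ Xm :=
        Submodule.eq_of_le_of_finrank_le le_sup_right (by omega)
      have hvXm : v ∈ Xm := by
        rw [h2]
        exact Submodule.mem_sup_left (Submodule.mem_span_singleton_self v)
      exact hvφ0 (hXφ v hvXm)
    have hu : u ∈ (ℝ ∙ v) ⊔ Xm := by rw [htop]; exact Submodule.mem_top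
    obtain ⟨y, hy, w, hw, hyw⟩ := Submodule.mem_sup.mp hu
    obtain ⟨a, rfl⟩ := Submodule.mem_span_singleton.mp hy
    have hφu : ⟪u, φ⟫ = a * ⟪v, φ⟫ := by
      rw [← hyw, inner_add_left, real_inner_smul_left, hXφ w hw]
      ring
    have ha : |a| * (2 * r) ≤ ‖u‖ := by
      have h1 : |a| * |⟪v, φ⟫| = |⟪u, φ⟫| := by rw [hφu, abs_mul]
      have h2 : |⟪u, φ⟫| ≤ ‖u‖ := by
        have h3 := abs_real_inner_le_norm u φ
        rwa [hφn, mul_one] at h3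
      nlinarith [abs_nonneg a, hvφ]
    have hwu : ‖w‖ ≤ ‖u‖ + |a| := by
      have hweq : w = u - a • v := by rw [← hyw]; abel
      rw [hweq]
      calc ‖u - a • v‖ ≤ ‖u‖ + ‖a • v‖ := norm_sub_le _ _
      _ = ‖u‖ + |a| := by rw [norm_smul, hvn, Real.norm_eq_abs, mul_one]
    have hgw : ‖g w‖ ≤ |c| / 2 * ‖w‖ := by
      by_cases hw0 : w = 0
      · simp [hw0]
      · have hnw : (0:ℝ) < ‖w‖ := norm_pos_iff.mpr hw0
        have hc1 := hcontr (‖w‖⁻¹ • w) (Submodule.smul_mem _ _ hw) (norm_smul_inv_norm hw0)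
        rw [map_smul, norm_smul, norm_inv, norm_norm] at hc1
        calc ‖g w‖ = ‖w‖ * (‖w‖⁻¹ * ‖g w‖) := by field_simp
        _ ≤ ‖w‖ * (|c| / 2) := mul_le_mul_of_nonneg_left hc1 hnw.le
        _ = |c| / 2 * ‖w‖ := by ring
    have hgu : ‖g u‖ ≤ |a| * |c| + |c| / 2 * ‖w‖ := by
      have hgueq : g u = a • (c • v) + g w := by
        rw [← hyw, map_add, map_smul, hgv]
      rw [hgueq]
      calc ‖a • (c • v) + g w‖ ≤ ‖a • (c • v)‖ + ‖g w‖ := norm_add_le _ _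
      _ ≤ |a| * |c| + |c| / 2 * ‖w‖ := by
          rw [norm_smul, norm_smul, hvn, Real.norm_eq_abs, Real.norm_eq_abs, mul_one]
          linarith
    exact Stmt14Aux.arith2 hgu ha hwu h2r1 hr (abs_nonneg c) (norm_nonneg u)
      (abs_nonneg a) (norm_nonneg w) (norm_nonneg (g u))
  -- operator norm inequalities
  have h2r2pos : (0:ℝ) < 2 * r ^ 2 := by positivity
  have hopnorm : ‖(g : EuclideanSpace ℝ (Fin d) →L[ℝ] EuclideanSpace ℝ (Fin d))‖ ≤
      |c| / (2 * r ^ 2) := by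
    apply ContinuousLinearMap.opNorm_le_bound _ (by positivity)
    intro u
    have := hbound u
    rw [div_mul_eq_mul_div, le_div_iff₀ h2r2pos]
    calc ‖(g : EuclideanSpace ℝ (Fin d) →L[ℝ] EuclideanSpace ℝ (Fin d)) u‖ * (2 * r ^ 2)
        = ‖g u‖ * (2 * r ^ 2) := rfl
      _ ≤ |c| * ‖u‖ := this
  -- norms of powers
  have hpow_v : ∀ n : ℕ, (g ^ n : EuclideanSpace ℝ (Fin d) ≃L[ℝ] EuclideanSpace ℝ (Fin d)) v
      = c ^ n • v := by
    intro n
    induction n with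
    | zero => rw [pow_zero, pow_zero, one_smul]; rfl
    | succ n ih =>
        have h1 : (g ^ (n + 1) : EuclideanSpace ℝ (Fin d) ≃L[ℝ] EuclideanSpace ℝ (Fin d)) v =
            (g ^ n : EuclideanSpace ℝ (Fin d) ≃L[ℝ] EuclideanSpace ℝ (Fin d)) (g v) := by
          rw [pow_succ]; rfl
        rw [h1, hgv, map_smul, ih, smul_smul, ← pow_succ']
  have hlow : ∀ n : ℕ, |c| ^ n ≤
      ‖((g ^ n : EuclideanSpace ℝ (Fin d) ≃L[ℝ] EuclideanSpace ℝ (Fin d)) :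
        EuclideanSpace ℝ (Fin d) →L[ℝ] EuclideanSpace ℝ (Fin d))‖ := by
    intro n
    have h1 := ContinuousLinearMap.le_opNorm
      ((g ^ n : EuclideanSpace ℝ (Fin d) ≃L[ℝ] EuclideanSpace ℝ (Fin d)) :
        EuclideanSpace ℝ (Fin d) →L[ℝ] EuclideanSpace ℝ (Fin d)) v
    have h2 : ‖((g ^ n : EuclideanSpace ℝ (Fin d) ≃L[ℝ] EuclideanSpace ℝ (Fin d)) :
        EuclideanSpace ℝ (Fin d) →L[ℝ] EuclideanSpace ℝ (Fin d)) v‖ = |c| ^ n := by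
      have h3 : ((g ^ n : EuclideanSpace ℝ (Fin d) ≃L[ℝ] EuclideanSpace ℝ (Fin d)) :
          EuclideanSpace ℝ (Fin d) →L[ℝ] EuclideanSpace ℝ (Fin d)) v =
          (g ^ n : EuclideanSpace ℝ (Fin d) ≃L[ℝ] EuclideanSpace ℝ (Fin d)) v := rfl
      rw [h3, hpow_v n, norm_smul, hvn, mul_one, norm_pow, Real.norm_eq_abs]
    rw [h2, hvn, mul_one] at h1
    exact h1
  have hup : ∀ n : ℕ,
      ‖((g ^ n : EuclideanSpace ℝ (Fin d) ≃L[ℝ] EuclideanSpace ℝ (Fin d)) :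
        EuclideanSpace ℝ (Fin d) →L[ℝ] EuclideanSpace ℝ (Fin d))‖ ≤
      ‖(g : EuclideanSpace ℝ (Fin d) →L[ℝ] EuclideanSpace ℝ (Fin d))‖ ^ n := by
    intro n
    induction n with
    | zero =>
        rw [pow_zero]
        apply ContinuousLinearMap.opNorm_le_bound _ zero_le_one
        intro u
        rw [one_mul]
        exact le_of_eq (congrArg norm rfl)
    | succ n ih =>
        apply ContinuousLinearMap.opNorm_le_bound _ (by positivity)
        intro u
        have h1 : ((g ^ (n+1) : EuclideanSpace ℝ (Fin d) ≃L[ℝ] EuclideanSpace ℝ (Fin d)) :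
            EuclideanSpace ℝ (Fin d) →L[ℝ] EuclideanSpace ℝ (Fin d)) u =
            ((g ^ n : EuclideanSpace ℝ (Fin d) ≃L[ℝ] EuclideanSpace ℝ (Fin d)) :
            EuclideanSpace ℝ (Fin d) →L[ℝ] EuclideanSpace ℝ (Fin d))
            ((g : EuclideanSpace ℝ (Fin d) →L[ℝ] EuclideanSpace ℝ (Fin d)) u) := by
          rw [pow_succ]; rfl
        rw [h1]
        refine le_trans (ContinuousLinearMap.le_opNorm _ _) ?_
        refine le_trans (mul_le_mul ih (ContinuousLinearMap.le_opNorm _ _) (norm_nonneg _)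
          (by positivity)) ?_
        exact le_of_eq (by ring)
  have hcpos : (0:ℝ) < |c| := abs_pos.mpr hc0
  have hgpos : (0:ℝ) < ‖(g : EuclideanSpace ℝ (Fin d) →L[ℝ] EuclideanSpace ℝ (Fin d))‖ := by
    have h1 := hlow 1
    have he : (g ^ 1 : EuclideanSpace ℝ (Fin d) ≃L[ℝ] EuclideanSpace ℝ (Fin d)) = g := pow_one g
    rw [he] at h1
    rw [pow_one] at h1
    exact lt_of_lt_of_le hcpos h1
  -- liminf bounds
  set L : ℕ → ℝ := fun n =>
    Real.log ‖((g ^ n : EuclideanSpace ℝ (Fin d) ≃L[ℝ] EuclideanSpace ℝ (Fin d)) :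
      EuclideanSpace ℝ (Fin d) →L[ℝ] EuclideanSpace ℝ (Fin d))‖ / n with hLdef
  have hlam : lambda1 g = sSup {a : ℝ | ∀ᶠ n in Filter.atTop, a ≤ L n} := Filter.liminf_eq
  have hL_low : ∀ n : ℕ, 1 ≤ n → Real.log |c| ≤ L n := by
    intro n hn
    have hnpos : (0:ℝ) < n := by exact_mod_cast hn
    have h1 : Real.log (|c| ^ n) ≤
        Real.log ‖((g ^ n : EuclideanSpace ℝ (Fin d) ≃L[ℝ] EuclideanSpace ℝ (Fin d)) :
          EuclideanSpace ℝ (Fin d) →L[ℝ] EuclideanSpace ℝ (Fin d))‖ :=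
      Real.log_le_log (pow_pos hcpos n) (hlow n)
    rw [Real.log_pow] at h1
    rw [hLdef]
    rw [le_div_iff₀ hnpos]
    calc Real.log |c| * n = n * Real.log |c| := by ring
      _ ≤ _ := h1
  have hL_up : ∀ n : ℕ, 1 ≤ n → L n ≤
      Real.log ‖(g : EuclideanSpace ℝ (Fin d) →L[ℝ] EuclideanSpace ℝ (Fin d))‖ := by
    intro n hn
    have hnpos : (0:ℝ) < n := by exact_mod_cast hn
    have hppos : (0:ℝ) < ‖((g ^ n : EuclideanSpace ℝ (Fin d) ≃L[ℝ] EuclideanSpace ℝ (Fin d)) :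
        EuclideanSpace ℝ (Fin d) →L[ℝ] EuclideanSpace ℝ (Fin d))‖ :=
      lt_of_lt_of_le (pow_pos hcpos n) (hlow n)
    have h1 : Real.log ‖((g ^ n : EuclideanSpace ℝ (Fin d) ≃L[ℝ] EuclideanSpace ℝ (Fin d)) :
        EuclideanSpace ℝ (Fin d) →L[ℝ] EuclideanSpace ℝ (Fin d))‖ ≤
        Real.log (‖(g : EuclideanSpace ℝ (Fin d) →L[ℝ] EuclideanSpace ℝ (Fin d))‖ ^ n) :=
      Real.log_le_log hppos (hup n)
    rw [Real.log_pow] at h1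
    rw [hLdef]
    rw [div_le_iff₀ hnpos]
    calc Real.log ‖((g ^ n : EuclideanSpace ℝ (Fin d) ≃L[ℝ] EuclideanSpace ℝ (Fin d)) :
        EuclideanSpace ℝ (Fin d) →L[ℝ] EuclideanSpace ℝ (Fin d))‖ ≤
        n * Real.log ‖(g : EuclideanSpace ℝ (Fin d) →L[ℝ] EuclideanSpace ℝ (Fin d))‖ := h1
      _ = Real.log ‖(g : EuclideanSpace ℝ (Fin d) →L[ℝ] EuclideanSpace ℝ (Fin d))‖ * n := by
        ring
  have hmemS : Real.log |c| ∈ {a : ℝ | ∀ᶠ n in Filter.atTop, a ≤ L n} := by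
    rw [Set.mem_setOf_eq, Filter.eventually_atTop]
    exact ⟨1, hL_low⟩
  have hubS : ∀ a ∈ {a : ℝ | ∀ᶠ n in Filter.atTop, a ≤ L n},
      a ≤ Real.log ‖(g : EuclideanSpace ℝ (Fin d) →L[ℝ] EuclideanSpace ℝ (Fin d))‖ := by
    intro a ha
    rw [Set.mem_setOf_eq, Filter.eventually_atTop] at ha
    obtain ⟨n₀, hn₀⟩ := ha
    exact (hn₀ (max n₀ 1) (le_max_left _ _)).trans (hL_up _ (le_max_right _ _))
  have hlam_up : lambda1 g ≤ mu1 g := by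
    rw [hlam]
    exact csSup_le ⟨_, hmemS⟩ hubS
  have hlam_low : Real.log |c| ≤ lambda1 g := by
    rw [hlam]
    exact le_csSup ⟨_, fun a ha => hubS a ha⟩ hmemS
  refine ⟨?_, hlam_up⟩
  have h2r2le : 2 * r ^ 2 ≤ 1 := by nlinarith
  have habs : |Real.log (2 * r ^ 2)| = -Real.log (2 * r ^ 2) :=
    abs_of_nonpos (Real.log_nonpos h2r2pos.le h2r2le)
  have hkey : ‖(g : EuclideanSpace ℝ (Fin d) →L[ℝ] EuclideanSpace ℝ (Fin d))‖ * (2 * r ^ 2)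
      ≤ |c| := by
    have h1 := mul_le_mul_of_nonneg_right hopnorm h2r2pos.le
    rwa [div_mul_cancel₀ _ (ne_of_gt h2r2pos)] at h1
  calc mu1 g - |Real.log (2 * r ^ 2)|
      = Real.log ‖(g : EuclideanSpace ℝ (Fin d) →L[ℝ] EuclideanSpace ℝ (Fin d))‖ +
        Real.log (2 * r ^ 2) := by rw [mu1, habs]; ring
    _ = Real.log (‖(g : EuclideanSpace ℝ (Fin d) →L[ℝ] EuclideanSpace ℝ (Fin d))‖ *
        (2 * r ^ 2)) := (Real.log_mul (ne_of_gt hgpos) (ne_of_gt h2r2pos)).symm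
    _ ≤ Real.log |c| := Real.log_le_log (by positivity) hkey
    _ ≤ lambda1 g := hlam_low
end
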